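/- arXiv:1210.1879 — 8 statements merged into one kernel-verified Lean document; each statement's English description precedes it below -/
import Mathlib

section
/- Let G be a group that is locally noetherian-by-finite, i.e., G has a normal locally noetherian subgroup H of finite index. Let α ∈ U₁(ℤG) be a unit of finite order. Then for every element g ∈ G of infinite order, the trace α̃(g) = Σ_{h ∈ C_g} α(h) equals 0. -/
open scoped Classical

/-- The augmentation map `ℤG → ℤ`, sending `Σ α(g) g` to `Σ α(g)`. -/
noncomputable def aug (G : Type*) [Group G] : MonoidAlgebra ℤ G →ₐ[ℤ] ℤ :=
  MonoidAlgebra.lift ℤ ℤ G 1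

/-- The trace `α̃(g) = Σ_{h ∈ C_g} α(h)`, the sum of the coefficients of `α`
over the conjugacy class of `g`. -/
noncomputable def trc {G : Type*} [Group G] (α : MonoidAlgebra ℤ G) (g : G) : ℤ :=
  ∑ h ∈ α.coeff.support.filter fun h => IsConj g h, α.coeff h

/-- `α` has the unique trace property: there is `g ∈ G`, unique up to conjugacy,
with `α̃(g) ≠ 0`. -/
def HasUniqueTrace {G : Type*} [Group G] (α : MonoidAlgebra ℤ G) : Prop :=
  ∃ g : G, trc α g ≠ 0 ∧ ∀ h : G, trc α h ≠ 0 → IsConj g h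

/-- `G` is a UT-group: every torsion unit of augmentation 1 in `ℤG` has the
unique trace property. -/
def IsUTGroup (G : Type*) [Group G] : Prop :=
  ∀ α : (MonoidAlgebra ℤ G)ˣ, aug G ↑α = 1 → IsOfFinOrder α →
    HasUniqueTrace (α : MonoidAlgebra ℤ G)

/-- `G` is a p-UT group: every unit of augmentation 1 in `ℤG` of prime power order
has the unique trace property. -/
def IsPUTGroup (G : Type*) [Group G] : Prop :=
  ∀ α : (MonoidAlgebra ℤ G)ˣ, aug G ↑α = 1 →
    (∃ p k : ℕ, p.Prime ∧ orderOf α = p ^ k) → HasUniqueTrace (α : MonoidAlgebra ℤ G)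

/-- A group is noetherian if every subgroup is finitely generated
(equivalently, it satisfies the maximal condition on subgroups). -/
def GroupNoetherian (G : Type*) [Group G] : Prop := ∀ K : Subgroup G, K.FG

/-- A group is locally noetherian if every finitely generated subgroup is noetherian. -/
def LocallyNoetherian (G : Type*) [Group G] : Prop :=
  ∀ H : Subgroup G, H.FG → GroupNoetherian ↥H

section Auxiliary

open Finset Function

lemma orbit_sum_aux {I : Type*} [DecidableEq I] {p : ℕ} (hp : p.Prime)
    (σ : I → I) (hper : ∀ x, σ^[p] x = x) (F : I → ℤ) (hF : ∀ x, F (σ x) = F x) :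
    ∀ (N : ℕ) (X : Finset I), X.card ≤ N → (∀ x ∈ X, σ x ∈ X) →
      (p : ℤ) ∣ (∑ x ∈ X, F x) - (∑ x ∈ X.filter (fun x => σ x = x), F x) := by
  have hσinj : Function.Injective σ := by
    intro a b h
    have h2 := congrArg (σ^[p-1]) h
    have h3 : σ^[p-1+1] a = σ^[p-1+1] b := by
      rw [Function.iterate_succ_apply σ (p-1) a, Function.iterate_succ_apply σ (p-1) b]
      exact h2
    rw [Nat.sub_add_cancel hp.one_le, hper, hper] at h3
    exact h3
  have hFiter : ∀ (t : ℕ) (x : I), F (σ^[t] x) = F x := by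
    intro t
    induction t with
    | zero => simp
    | succ t ih => intro x; rw [Function.iterate_succ_apply', hF, ih]
  intro N
  induction N with
  | zero =>
    intro X hcard hX
    have : X = ∅ := Finset.card_eq_zero.mp (Nat.le_zero.mp hcard)
    simp [this]
  | succ N ih =>
    intro X hcard hX
    by_cases hfix : ∀ x ∈ X, σ x = x
    · have : X.filter (fun x => σ x = x) = X := Finset.filter_eq_self.mpr hfix
      simp [this]
    · push_neg at hfix
      obtain ⟨x₀, hx₀X, hx₀⟩ := hfix
      set O : Finset I := (Finset.range p).image (fun t => σ^[t] x₀) with hO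
      have hperiod : Function.minimalPeriod σ x₀ = p := by
        have hdvd : Function.minimalPeriod σ x₀ ∣ p :=
          Function.IsPeriodicPt.minimalPeriod_dvd (hper x₀)
        rcases (Nat.Prime.eq_one_or_self_of_dvd hp _ hdvd) with h1 | h
        · exact absurd (Function.minimalPeriod_eq_one_iff_isFixedPt.mp h1) hx₀
        · exact h
      have hinj : Set.InjOn (fun t => σ^[t] x₀) (Finset.range p : Set ℕ) := by
        intro a ha b hb hab
        have h := Function.iterate_injOn_Iio_minimalPeriod (f := σ) (x := x₀)
        rw [hperiod] at h
        exact h (by simpa using ha) (by simpa using hb) hab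
      have hOcard : O.card = p := by
        rw [hO, Finset.card_image_of_injOn hinj, Finset.card_range]
      have hmemO : ∀ t, t < p → σ^[t] x₀ ∈ O := fun t ht =>
        Finset.mem_image.mpr ⟨t, Finset.mem_range.mpr ht, rfl⟩
      have hOsubX : ∀ t : ℕ, σ^[t] x₀ ∈ X := by
        intro t
        induction t with
        | zero => simpa using hx₀X
        | succ t iht => rw [Function.iterate_succ_apply']; exact hX _ iht
      have hOsub : O ⊆ X := by
        intro y hy
        rw [hO, Finset.mem_image] at hy
        obtain ⟨t, _, rfl⟩ := hy
        exact hOsubX t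
      have hOclosed : ∀ y ∈ O, σ y ∈ O := by
        intro y hy
        rw [hO, Finset.mem_image] at hy
        obtain ⟨t, ht, rfl⟩ := hy
        rw [Finset.mem_range] at ht
        rw [← Function.iterate_succ_apply' σ t x₀]
        by_cases htp : t + 1 < p
        · exact hmemO _ htp
        · have he : t + 1 = p := by omega
          simp only [Nat.succ_eq_add_one, he, hper]
          exact hmemO 0 hp.pos
      have hOnofix : ∀ y ∈ O, ¬ σ y = y := by
        intro y hy hfixy
        rw [hO, Finset.mem_image] at hy
        obtain ⟨t, ht, rfl⟩ := hy
        rw [Finset.mem_range] at ht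
        apply hx₀
        have hx0y : σ^[p-t] (σ^[t] x₀) = x₀ := by
          rw [← Function.iterate_add_apply]
          have : p - t + t = p := by omega
          rw [this, hper]
        calc σ x₀ = σ x₀ := rfl
        _ = σ (σ^[p-t] (σ^[t] x₀)) := by rw [hx0y]
        _ = σ^[p-t] (σ (σ^[t] x₀)) :=
              ((Function.iterate_succ_apply' σ (p-t) _).symm.trans
                (Function.iterate_succ_apply σ (p-t) _))
        _ = σ^[p-t] (σ^[t] x₀) := by rw [hfixy]
        _ = x₀ := hx0y
      -- sum over the orbit
      have hOsum : ∑ y ∈ O, F y = (p : ℤ) * F x₀ := by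
        rw [hO, Finset.sum_image hinj]
        have : ∀ t ∈ Finset.range p, F (σ^[t] x₀) = F x₀ := fun t _ => hFiter t x₀
        rw [Finset.sum_congr rfl this, Finset.sum_const, Finset.card_range]
        push_cast; ring
      -- recurse on X \ O
      set X' := X \ O with hX'
      have hX'closed : ∀ x ∈ X', σ x ∈ X' := by
        intro x hx
        rw [hX', Finset.mem_sdiff] at hx ⊢
        refine ⟨hX x hx.1, fun hσxO => hx.2 ?_⟩
        rw [hO, Finset.mem_image] at hσxO
        obtain ⟨t, ht, hteq⟩ := hσxO
        rw [Finset.mem_range] at ht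
        rcases Nat.eq_zero_or_pos t with ht0 | htpos
        · -- σ x = x₀ = σ (σ^[p-1] x₀)
          subst ht0
          have h4 : σ x = σ (σ^[p-1] x₀) := by
            have h5 : x₀ = σ (σ^[p-1] x₀) := by
              conv_lhs => rw [← hper x₀, show p = (p-1)+1 by omega]
              exact Function.iterate_succ_apply' σ (p-1) x₀
            rw [← h5]
            exact hteq.symm
          rw [hσinj h4]
          exact hmemO _ (by omega)
        · have h4 : σ x = σ (σ^[t-1] x₀) := by
            have h5 : σ^[t] x₀ = σ (σ^[t-1] x₀) := by
              conv_lhs => rw [show t = (t-1)+1 by omega]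
              exact Function.iterate_succ_apply' σ (t-1) x₀
            rw [← h5]
            exact hteq.symm
          rw [hσinj h4]
          exact hmemO _ (by omega)
      have hsplit : X = X' ∪ O := by
        rw [hX', Finset.sdiff_union_of_subset hOsub]
      have hdisj : Disjoint X' O := Finset.sdiff_disjoint
      have hcard' : X'.card ≤ N := by
        have h1 : X'.card + O.card = X.card := by
          rw [hsplit, Finset.card_union_of_disjoint hdisj]
        have hOpos : 1 ≤ O.card := by rw [hOcard]; exact hp.one_le
        omega
      have hfiltereq : X.filter (fun x => σ x = x) = X'.filter (fun x => σ x = x) := by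
        apply Finset.ext
        intro y
        simp only [Finset.mem_filter, hX', Finset.mem_sdiff]
        constructor
        · rintro ⟨hyX, hyfix⟩
          exact ⟨⟨hyX, fun hyO => hOnofix y hyO hyfix⟩, hyfix⟩
        · rintro ⟨⟨hyX, _⟩, hyfix⟩
          exact ⟨hyX, hyfix⟩
      have hsum : ∑ x ∈ X, F x = (∑ x ∈ X', F x) + ∑ y ∈ O, F y := by
        rw [hsplit, Finset.sum_union hdisj]
      rw [hsum, hfiltereq, hOsum]
      have hihX := ih X' hcard' hX'closed
      have heq : (∑ x ∈ X', F x) + (p:ℤ) * F x₀ - ∑ x ∈ X'.filter (fun x => σ x = x), F x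
          = ((∑ x ∈ X', F x) - ∑ x ∈ X'.filter (fun x => σ x = x), F x) + (p:ℤ) * F x₀ := by
        ring
      rw [heq]
      exact dvd_add hihX (dvd_mul_right _ _)


noncomputable section PairSection

variable {G : Type*} [Group G]

/-- The pairing `⟨ψ, v⟩ = ∑ ψ(h)·v(h)` as an additive monoid hom. -/
def pairF (ψ : G → ℤ) : MonoidAlgebra ℤ G →+ ℤ :=
  (Finsupp.liftAddHom fun h => AddMonoidHom.mulLeft (ψ h)).comp
    MonoidAlgebra.coeffAddEquiv.toAddMonoidHom

lemma pairF_single (ψ : G → ℤ) (x : G) (c : ℤ) :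
    pairF ψ (MonoidAlgebra.single x c) = ψ x * c := by
  exact Finsupp.liftAddHom_apply_single (fun h => AddMonoidHom.mulLeft (ψ h)) x c

lemma pairF_apply (ψ : G → ℤ) (v : MonoidAlgebra ℤ G) :
    pairF ψ v = ∑ h ∈ v.coeff.support, ψ h * v.coeff h := by
  rw [show pairF ψ v = v.coeff.sum (fun x c => ψ x * c) from rfl]
  rfl

/-- Expansion of a power of an element of the group algebra as a sum over tuples. -/
lemma expand_pow (v : MonoidAlgebra ℤ G) (n : ℕ) [DecidableEq G] :
    v ^ n = ∑ f ∈ Fintype.piFinset (fun _ : Fin n => v.coeff.support),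
      MonoidAlgebra.single ((List.ofFn f).prod) (∏ i, v.coeff (f i)) := by
  induction n with
  | zero =>
    rw [pow_zero]
    have h1 : ∀ f ∈ Fintype.piFinset (fun _ : Fin 0 => v.coeff.support),
        MonoidAlgebra.single ((List.ofFn f).prod) (∏ i, v.coeff (f i))
        = MonoidAlgebra.single (1 : G) (1 : ℤ) := by
      intro f _
      simp [List.ofFn_zero]
    rw [Finset.sum_congr rfl h1, Finset.sum_const]
    have h2 : (Fintype.piFinset (fun _ : Fin 0 => v.coeff.support)).card = 1 := by
      simp [Fintype.card_piFinset]
    rw [h2, one_nsmul]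
    rfl
  | succ n ih =>
    rw [pow_succ']  -- v^(n+1) = v * v^n
    conv_lhs => rw [ih]
    nth_rewrite 1 [← MonoidAlgebra.sum_coeff_single v]
    rw [Finsupp.sum]
    rw [Finset.sum_mul_sum]
    -- now a double sum over h ∈ v.coeff.support and f ∈ piFinset
    rw [← Finset.sum_product']
    refine Finset.sum_nbij' (fun p => Fin.cons p.1 p.2) (fun f => (f 0, Fin.tail f)) ?_ ?_ ?_ ?_ ?_
    · rintro ⟨h, f⟩ hp
      simp only [Finset.mem_product, Fintype.mem_piFinset] at hp
      rw [Fintype.mem_piFinset]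
      intro i
      refine Fin.cases ?_ ?_ i
      · simpa using hp.1
      · intro j; simpa using hp.2 j
    · intro f hf
      simp only [Fintype.mem_piFinset] at hf
      simp only [Finset.mem_product, Fintype.mem_piFinset]
      exact ⟨hf 0, fun j => hf j.succ⟩
    · rintro ⟨h, f⟩ _
      simp [Fin.cons_zero, Fin.tail_cons]
    · intro f _
      exact Fin.cons_self_tail f
    · rintro ⟨h, f⟩ _
      rw [MonoidAlgebra.single_mul_single]
      congr 1
      · rw [List.ofFn_succ]
        simp [Fin.cons_zero, Fin.cons_succ]
      · rw [Fin.prod_univ_succ]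
        simp [Fin.cons_zero, Fin.cons_succ]


open Fin.NatCast in
lemma frobenius_step [DecidableEq G] {p : ℕ} (hp : p.Prime)
    (ψ : G → ℤ) (hψ : ∀ a b : G, ψ (a * b) = ψ (b * a)) (v : MonoidAlgebra ℤ G) :
    (p : ℤ) ∣ pairF ψ (v ^ p) - pairF (fun h => ψ (h ^ p)) v := by
  haveI : NeZero p := ⟨hp.ne_zero⟩
  -- the rotation
  set σ : (Fin p → G) → (Fin p → G) := fun f => fun i => f (i + 1) with hσ
  have hσiter : ∀ (t : ℕ) (f : Fin p → G) (i : Fin p), (σ^[t] f) i = f (i + (t : Fin p)) := by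
    intro t
    induction t with
    | zero => intro f i; simp
    | succ t ih =>
      intro f i
      rw [Function.iterate_succ_apply]
      rw [ih (σ f) i]
      show f (i + (t:Fin p) + 1) = f (i + ((t:ℕ)+1 : ℕ))
      congr 1
      push_cast
      rw [add_assoc]
  have hper : ∀ f, σ^[p] f = f := by
    intro f; funext i
    rw [hσiter p f i]
    simp
  -- the summand
  set F : (Fin p → G) → ℤ := fun f => ψ ((List.ofFn f).prod) * ∏ i, v.coeff (f i) with hF
  have hψconj : ∀ (u w : G), ψ (u * w) = ψ (w * u) := hψ
  -- σ-invariance of F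
  obtain ⟨m, rfl⟩ : ∃ m, p = m + 1 := ⟨p - 1, by have := hp.pos; omega⟩
  have hcastsucc : ∀ i : Fin m, (Fin.castSucc i) + 1 = i.succ := by
    intro i
    apply Fin.ext
    rw [Fin.val_add_one]
    have hne : Fin.castSucc i ≠ Fin.last m := by
      intro hcontra
      have := congrArg Fin.val hcontra
      simp [Fin.castSucc] at this
      omega
    rw [if_neg hne]
    simp
  have hlast : (Fin.last m) + 1 = 0 := by
    apply Fin.ext
    rw [Fin.val_add_one, if_pos rfl]
    simp
  have hrot : ∀ f : Fin (m+1) → G, (List.ofFn (σ f)).prod = 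
      (List.ofFn fun i : Fin m => f i.succ).prod * f 0 := by
    intro f
    rw [List.ofFn_succ']
    rw [List.concat_eq_append, List.prod_append]
    simp only [List.prod_cons, List.prod_nil, mul_one]
    have h1 : (List.ofFn fun i : Fin m => σ f (Fin.castSucc i))
        = List.ofFn fun i : Fin m => f i.succ :=
      congrArg List.ofFn (funext fun i => by
        show f (Fin.castSucc i + 1) = f i.succ
        rw [hcastsucc])
    have h2 : σ f (Fin.last m) = f 0 := by
      show f (Fin.last m + 1) = f 0
      rw [hlast]
    rw [h1, h2]
  have hFinv : ∀ f, F (σ f) = F f := by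
    intro f
    rw [hF]
    simp only
    congr 1
    · rw [hrot f, List.ofFn_succ (f := f)]
      simp only [List.prod_cons]
      rw [hψ]
    · -- ∏ i, v (σ f i) = ∏ i, v.coeff (f i)
      exact Fintype.prod_equiv (Equiv.addRight (1 : Fin (m+1)))
        (fun i => v.coeff (f (i + 1))) (fun j => v.coeff (f j)) (fun i => rfl)
  -- fixed points are constant functions
  have hfixconst : ∀ f : Fin (m+1) → G, σ f = f → ∀ i, f i = f 0 := by
    intro f hfix i
    have hstep : ∀ j : Fin (m+1), f (j + 1) = f j := fun j => congrFun hfix j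
    have hnat : ∀ t : ℕ, f (t : Fin (m+1)) = f 0 := by
      intro t
      induction t with
      | zero => simp
      | succ t ih =>
        have : ((t + 1 : ℕ) : Fin (m+1)) = (t : Fin (m+1)) + 1 := by push_cast; rfl
        rw [this, hstep, ih]
    rw [← Fin.cast_val_eq_self i, hnat]
  -- the index set
  set X : Finset (Fin (m+1) → G) := Fintype.piFinset (fun _ => v.coeff.support) with hX
  have hXclosed : ∀ f ∈ X, σ f ∈ X := by
    intro f hf
    rw [hX, Fintype.mem_piFinset] at hf ⊢
    intro i
    exact hf (i + 1)
  -- expansion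
  have hexp : pairF ψ (v ^ (m+1)) = ∑ f ∈ X, F f := by
    rw [expand_pow v (m+1), map_sum]
    apply Finset.sum_congr rfl
    intro f _
    rw [pairF_single]
  -- orbit congruence
  have horb := orbit_sum_aux hp σ hper F hFinv X.card X le_rfl hXclosed
  -- fixed point sum
  have hfixsum : ∑ f ∈ X.filter (fun f => σ f = f), F f
      = ∑ c ∈ v.coeff.support, ψ (c ^ (m+1)) * (v.coeff c) ^ (m+1) := by
    refine Finset.sum_nbij' (fun f => f 0) (fun c => fun _ => c) ?_ ?_ ?_ ?_ ?_
    · intro f hf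
      rw [Finset.mem_filter] at hf
      have := Fintype.mem_piFinset.mp hf.1
      exact this 0
    · intro c hc
      rw [Finset.mem_filter]
      constructor
      · rw [Fintype.mem_piFinset]; intro _; exact hc
      · rfl
    · intro f hf
      rw [Finset.mem_filter] at hf
      funext i
      exact (hfixconst f hf.2 i).symm
    · intro c _
      rfl
    · intro f hf
      rw [Finset.mem_filter] at hf
      have hconst := hfixconst f hf.2
      rw [hF]
      simp only
      congr 1
      · congr 1
        have : List.ofFn f = List.replicate (m+1) (f 0) := by
          rw [← List.ofFn_const]
          congr 1
          funext i
          exact hconst i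
        rw [this, List.prod_replicate]
      · rw [Finset.prod_congr rfl (fun i _ => by rw [hconst i])]
        rw [Finset.prod_const, Finset.card_univ, Fintype.card_fin]
  -- Fermat
  have hferm : ((m+1 : ℕ) : ℤ) ∣ (∑ c ∈ v.coeff.support, ψ (c ^ (m+1)) * (v.coeff c) ^ (m+1))
      - pairF (fun h => ψ (h ^ (m+1))) v := by
    rw [pairF_apply, ← Finset.sum_sub_distrib]
    apply Finset.dvd_sum
    intro c _
    have : ψ (c ^ (m+1)) * (v.coeff c) ^ (m+1) - ψ (c ^ (m+1)) * (v.coeff c)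
        = ψ (c ^ (m+1)) * ((v.coeff c) ^ (m+1) - v.coeff c) := by ring
    rw [this]
    apply Dvd.dvd.mul_left
    -- (v.coeff c)^p ≡ v c mod p
    have hzmod : (((v.coeff c) ^ (m+1) - v.coeff c : ℤ) : ZMod (m+1)) = 0 := by
      push_cast
      haveI : Fact (Nat.Prime (m+1)) := ⟨hp⟩
      rw [ZMod.pow_card]
      ring
    exact (ZMod.intCast_zmod_eq_zero_iff_dvd _ _).mp hzmod
  -- combine
  have htotal : pairF ψ (v ^ (m+1)) - pairF (fun h => ψ (h ^ (m+1))) v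
      = (pairF ψ (v ^ (m+1)) - ∑ f ∈ X.filter (fun f => σ f = f), F f)
        + ((∑ c ∈ v.coeff.support, ψ (c ^ (m+1)) * (v.coeff c) ^ (m+1))
            - pairF (fun h => ψ (h ^ (m+1))) v) := by
    rw [hfixsum]; ring
  rw [htotal]
  apply dvd_add
  · rw [hexp]; exact horb
  · exact hferm

lemma class_fn_pow {ψ : G → ℤ} (hψ : ∀ a b : G, ψ (a * b) = ψ (b * a)) (n : ℕ) :
    ∀ a b : G, ψ ((a * b) ^ n) = ψ ((b * a) ^ n) := by
  have hconj : ∀ u w : G, ψ (u * w * u⁻¹) = ψ w := by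
    intro u w
    rw [hψ]
    group
  intro a b
  have h1 : (b * a) ^ n = a⁻¹ * (a * b) ^ n * a := by
    have := conj_pow (i := n) (a := a⁻¹) (b := a * b)
    rw [inv_inv] at this
    rw [← this]
    congr 1
    group
  rw [h1]
  have := hconj a⁻¹ ((a * b) ^ n)
  rw [inv_inv] at this
  rw [← this]

lemma frobenius_iter [DecidableEq G] {p : ℕ} (hp : p.Prime)
    (ψ : G → ℤ) (hψ : ∀ a b : G, ψ (a * b) = ψ (b * a)) :
    ∀ (k : ℕ) (v : MonoidAlgebra ℤ G),
      (p : ℤ) ∣ pairF ψ (v ^ (p ^ k)) - pairF (fun h => ψ (h ^ (p ^ k))) v := by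
  intro k
  induction k with
  | zero =>
    intro v
    simp only [pow_zero, pow_one]
    rw [show (fun h : G => ψ h) = ψ from rfl, sub_self]
    exact dvd_zero _
  | succ k ih =>
    intro v
    have h1 : v ^ (p ^ (k+1)) = (v ^ p) ^ (p ^ k) := by
      rw [← pow_mul, ← pow_succ']
    have hψ' : ∀ a b : G, ψ ((a * b) ^ (p ^ k)) = ψ ((b * a) ^ (p ^ k)) :=
      class_fn_pow hψ (p ^ k)
    have hstep := frobenius_step hp (fun h => ψ (h ^ (p ^ k))) hψ' v
    have hih := ih (v ^ p)
    have h2 : (fun h : G => ψ ((h ^ p) ^ (p ^ k))) = fun h : G => ψ (h ^ (p ^ (k+1))) := by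
      funext h
      rw [← pow_mul, ← pow_succ']
    rw [h2] at hstep
    have h3 : pairF ψ (v ^ (p ^ (k+1))) - pairF (fun h => ψ (h ^ (p ^ (k+1)))) v
        = (pairF ψ ((v ^ p) ^ (p ^ k)) - pairF (fun h => ψ (h ^ (p ^ k))) (v ^ p))
          + (pairF (fun h => ψ (h ^ (p ^ k))) (v ^ p)
              - pairF (fun h => ψ (h ^ (p ^ (k+1)))) v) := by
      rw [h1]; ring
    rw [h3]
    exact dvd_add hih hstep


/-- If `x a x⁻¹ = a^Q` with `Q ≥ 2` and `a` of infinite order, then `G` cannot be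
locally noetherian-by-finite. -/
lemma no_bs_pair (H : Subgroup G) (hHnorm : H.Normal) (hHfin : H.FiniteIndex)
    (hHnoeth : LocallyNoetherian ↥H) (a x : G) (Q : ℕ) (hQ : 2 ≤ Q)
    (ha : ¬ IsOfFinOrder a) (hconj : x * a * x⁻¹ = a ^ Q) : False := by
  classical
  haveI := hHnorm
  -- the chain of cyclic subgroups
  set c : ℕ → G := fun j => (x ^ (j:ℤ))⁻¹ * a * ((x ^ (j:ℤ))⁻¹)⁻¹ with hc
  have hcstep : ∀ j, (c (j+1)) ^ Q = c j := by
    intro j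
    rw [hc]
    simp only
    rw [conj_pow, ← hconj]
    rw [show (((j:ℕ)+1:ℕ) : ℤ) = (j:ℤ)+1 by push_cast; ring]
    group
  -- each c j has infinite order
  have hcinf : ∀ j, ¬ IsOfFinOrder (c j) := by
    intro j hfin
    apply ha
    have : a = (MulAut.conj (x ^ (j:ℤ))) (c j) := by
      rw [hc]
      simp only [MulAut.conj_apply]
      group
    rw [this]
    exact (MulAut.conj (x ^ (j:ℤ))).toMonoidHom.isOfFinOrder hfin
  -- the chain
  set A : ℕ → Subgroup G := fun j => Subgroup.zpowers (c j) with hA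
  have hAstep : ∀ j, A j ≤ A (j+1) := by
    intro j
    rw [hA, Subgroup.zpowers_le]
    rw [← hcstep j]
    exact pow_mem (Subgroup.mem_zpowers _) Q
  have hAmono : Monotone A := monotone_nat_of_le_succ hAstep
  have hAnotle : ∀ j, ¬ (A (j+1) ≤ A j) := by
    intro j hle
    have hmem : c (j+1) ∈ Subgroup.zpowers (c j) := hle (Subgroup.mem_zpowers _)
    obtain ⟨t, ht⟩ := Subgroup.mem_zpowers_iff.mp hmem
    have h1 : (c j) ^ ((t * Q : ℤ)) = (c j) ^ (1:ℤ) := by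
      rw [zpow_mul, ht, zpow_one, zpow_natCast]
      exact hcstep j
    have hinj := injective_zpow_iff_not_isOfFinOrder.mpr (hcinf j)
    have h2 : t * Q = 1 := hinj h1
    have : (Q : ℤ) ∣ 1 := Dvd.intro_left t h2
    have hQ1 := Int.le_of_dvd one_pos this
    omega
  -- relative indices
  set d : ℕ → ℕ := fun j => H.relIndex (A j) with hd
  have hdne : ∀ j, d j ≠ 0 := by
    intro j h0
    have hdvd : H.relIndex (A j) ∣ H.index := Subgroup.relIndex_dvd_index_of_normal H (A j)
    simp only [hd] at h0
    rw [h0] at hdvd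
    exact hHfin.index_ne_zero (Nat.eq_zero_of_zero_dvd hdvd)
  have hdle : ∀ j, d j ≤ H.index := by
    intro j
    apply Nat.le_of_dvd (Nat.pos_of_ne_zero hHfin.index_ne_zero)
    exact Subgroup.relIndex_dvd_index_of_normal H (A j)
  -- growth under stationarity
  have hgrow : ∀ j, H ⊓ A j = H ⊓ A (j+1) → 2 * d j ≤ d (j+1) := by
    intro j heq
    set r : ℕ := (A j).relIndex (A (j+1)) with hr
    have hmul : d j * r = d (j+1) := by
      simp only [hd, hr]
      rw [← Subgroup.inf_relIndex_right H (A j), ← Subgroup.inf_relIndex_right H (A (j+1))]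
      rw [← heq]
      exact Subgroup.relIndex_mul_relIndex _ _ _ inf_le_right (hAstep j)
    have hrne1 : r ≠ 1 := by
      intro h1
      exact hAnotle j (Subgroup.relIndex_eq_one.mp h1)
    have hrne0 : r ≠ 0 := by
      intro h0
      apply hdne (j+1)
      rw [← hmul, h0, mul_zero]
    have : 2 ≤ r := by omega
    calc 2 * d j ≤ d j * r := by rw [mul_comm]; exact Nat.mul_le_mul_left _ this
    _ = d (j+1) := hmul
  -- infinitely many strict steps
  have hstrict : ∀ J, ∃ j, J ≤ j ∧ H ⊓ A j ≠ H ⊓ A (j+1) := by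
    intro J
    by_contra hcon
    push_neg at hcon
    have hgrowall : ∀ t : ℕ, 2 ^ t * d J ≤ d (J + t) := by
      intro t
      induction t with
      | zero => simp
      | succ t ih =>
        have h1 := hgrow (J + t) (hcon (J + t) (by omega))
        calc 2 ^ (t+1) * d J = 2 * (2 ^ t * d J) := by ring
        _ ≤ 2 * d (J + t) := by omega
        _ ≤ d (J + t + 1) := h1
        _ = d (J + (t+1)) := by ring_nf
    have h1 := hgrowall H.index
    have h2 := hdle (J + H.index)
    have h3 : 1 ≤ d J := Nat.pos_of_ne_zero (hdne J)
    have h4 : H.index < 2 ^ H.index := Nat.lt_two_pow_self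
    have h5 : 2 ^ H.index ≤ 2 ^ H.index * d J := Nat.le_mul_of_pos_right _ h3
    omega
  -- now the noetherian contradiction
  set K : Subgroup G := Subgroup.closure {a, x} with hK
  have haK : a ∈ K := Subgroup.subset_closure (by simp)
  have hxK : x ∈ K := Subgroup.subset_closure (by simp)
  have hcK : ∀ j, c j ∈ K := by
    intro j
    rw [hc]
    simp only
    exact mul_mem (mul_mem (inv_mem (zpow_mem hxK _)) haK) (inv_mem (inv_mem (zpow_mem hxK _)))
  have hAK : ∀ j, A j ≤ K := by
    intro j
    rw [hA, Subgroup.zpowers_le]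
    exact hcK j
  have hKfg : K.FG := by
    refine ⟨{a, x}, ?_⟩
    rw [hK]
    congr 1
    simp
  haveI hKfg' : Group.FG ↥K := (Group.fg_iff_subgroup_fg K).mpr hKfg
  -- H ∩ K is finitely generated
  haveI hWfi : (H.subgroupOf K).FiniteIndex := by
    constructor
    intro h0
    have : H.relIndex K = 0 := h0
    have hdvd := Subgroup.relIndex_dvd_index_of_normal H K
    rw [this] at hdvd
    exact hHfin.index_ne_zero (Nat.eq_zero_of_zero_dvd hdvd)
  haveI hWfg : Group.FG ↥(H.subgroupOf K) := Subgroup.fg_of_index_ne_zero _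
  -- transfer to a subgroup of ↥H
  set S : Subgroup ↥H := (H ⊓ K).subgroupOf H with hS
  have hiso : ↥(H.subgroupOf K) ≃* ↥S := by
    have h1 : H.subgroupOf K = (H ⊓ K).subgroupOf K := (Subgroup.inf_subgroupOf_right H K).symm
    exact (MulEquiv.subgroupCongr h1).trans
      ((Subgroup.subgroupOfEquivOfLe (inf_le_right : H ⊓ K ≤ K)).trans
        (Subgroup.subgroupOfEquivOfLe (inf_le_left : H ⊓ K ≤ H)).symm)
  haveI hSfg' : Group.FG ↥S := Group.fg_of_surjective (f := hiso.toMonoidHom) hiso.surjective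
  have hSfg : S.FG := (Group.fg_iff_subgroup_fg S).mp hSfg'
  have hnoeth : GroupNoetherian ↥S := hHnoeth S hSfg
  -- the embedding of ↥S into G
  set f : ↥S →* G := H.subtype.comp S.subtype with hf
  have hfrange : f.range = H ⊓ K := by
    rw [hf, MonoidHom.range_comp, Subgroup.range_subtype, hS,
      Subgroup.subgroupOf_map_subtype]
    exact inf_eq_left.mpr inf_le_left
  -- the pulled-back chain
  set B : ℕ → Subgroup G := fun j => H ⊓ A j with hB
  have hBK : ∀ j, B j ≤ H ⊓ K := fun j => inf_le_inf_left H (hAK j)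
  have hBmono : Monotone B := fun i j hij => inf_le_inf_left H (hAmono hij)
  set V : ℕ → Subgroup ↥S := fun j => (B j).comap f with hV
  have hVmono : Monotone V := fun i j hij => Subgroup.comap_mono (hBmono hij)
  have hmapV : ∀ j, (V j).map f = B j := by
    intro j
    rw [hV]
    simp only
    rw [Subgroup.map_comap_eq, hfrange]
    exact inf_eq_right.mpr (hBK j)
  -- the union is finitely generated, hence the chain stabilizes
  obtain ⟨T, hT⟩ := hnoeth (⨆ j, V j)
  have hdir : Directed (· ≤ ·) V := hVmono.directed_le
  have hTsub : ∀ t : ↥S, t ∈ (T : Set ↥S) → ∃ j, t ∈ V j := by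
    intro t ht
    have : t ∈ (⨆ j, V j) := by
      rw [← hT]
      exact Subgroup.subset_closure ht
    exact (Subgroup.mem_iSup_of_directed hdir).mp this
  classical
  set jf : ↥S → ℕ := fun t => if h : ∃ j, t ∈ V j then h.choose else 0 with hjf
  set J : ℕ := T.sup jf with hJ
  have hTJ : ∀ t : ↥S, t ∈ (T : Set ↥S) → t ∈ V J := by
    intro t ht
    obtain ⟨j, hj⟩ := hTsub t ht
    have hex : ∃ j, t ∈ V j := ⟨j, hj⟩
    have h1 : t ∈ V (jf t) := by
      rw [hjf]
      simp only [dif_pos hex]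
      exact hex.choose_spec
    exact hVmono (Finset.le_sup (f := jf) (by exact_mod_cast ht)) h1
  have hsupJ : (⨆ j, V j) ≤ V J := by
    rw [← hT]
    exact (Subgroup.closure_le _).mpr hTJ
  have hVJ : ∀ j, V j ≤ V J := fun j => le_trans (le_iSup V j) hsupJ
  have hBJ : ∀ j, J ≤ j → B j = B J := by
    intro j hj
    refine le_antisymm ?_ (hBmono hj)
    rw [← hmapV j, ← hmapV J]
    exact Subgroup.map_mono (hVJ j)
  obtain ⟨j, hjJ, hjne⟩ := hstrict J
  apply hjne
  show H ⊓ A j = H ⊓ A (j+1)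
  calc H ⊓ A j = B j := rfl
  _ = B J := hBJ j hjJ
  _ = B (j+1) := (hBJ (j+1) (by omega)).symm
  _ = H ⊓ A (j+1) := rfl


end PairSection

end Auxiliary

open Finset Function

/-- If `G` has a normal locally noetherian subgroup of finite index and
`α ∈ U₁(ℤG)` is a torsion unit, then `α̃(g) = 0` for every `g ∈ G` of infinite order. -/
theorem trace_eq_zero_of_infinite_order {G : Type*} [Group G]
    (H : Subgroup G) (hHnorm : H.Normal) (hHfin : H.FiniteIndex)
    (hHnoeth : LocallyNoetherian ↥H)
    (α : (MonoidAlgebra ℤ G)ˣ) (hα : aug G ↑α = 1) (hord : IsOfFinOrder α)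
    (g : G) (hg : ¬ IsOfFinOrder g) :
    trc (α : MonoidAlgebra ℤ G) g = 0 := by
  classical
  by_contra htrc
  set u : MonoidAlgebra ℤ G := (α : MonoidAlgebra ℤ G) with hu
  set n : ℕ := orderOf α with hn
  have hnpos : 0 < n := hord.orderOf_pos
  -- the class function
  set χ : G → ℤ := fun h => if IsConj g h then 1 else 0 with hχ
  have hχclass : ∀ a b : G, χ (a * b) = χ (b * a) := by
    intro a b
    have hiff : IsConj g (a * b) ↔ IsConj g (b * a) := by
      have hab : IsConj (a * b) (b * a) := isConj_iff.mpr ⟨a⁻¹, by group⟩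
      exact ⟨fun h => h.trans hab, fun h => h.trans hab.symm⟩
    simp only [hχ, hiff]
  have htrc_pair : pairF χ u = trc u g := by
    rw [pairF_apply, trc, Finset.sum_filter]
    apply Finset.sum_congr rfl
    intro h _
    by_cases hc : IsConj g h <;> simp [hχ, hc]
  -- choose a large prime
  obtain ⟨p, hpge, hp⟩ := Nat.exists_infinite_primes (max n (trc u g).natAbs + 1)
  have hpn : p.Coprime n := by
    rw [Nat.coprime_comm]
    apply Nat.Coprime.symm
    rw [hp.coprime_iff_not_dvd]
    intro hdvd
    have := Nat.le_of_dvd hnpos hdvd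
    omega
  have hptrc : ¬ ((p : ℤ) ∣ trc u g) := by
    intro hdvd
    have h1 : p ∣ (trc u g).natAbs := by
      have := Int.natAbs_dvd_natAbs.mpr hdvd
      simpa using this
    have h2 : (trc u g).natAbs ≠ 0 := Int.natAbs_ne_zero.mpr htrc
    have := Nat.le_of_dvd (Nat.pos_of_ne_zero h2) h1
    omega
  -- key step: for each j there is a support element whose p^k-th power is conjugate to g
  have hkey : ∀ j : ℕ, ∃ h ∈ u.coeff.support, IsConj g (h ^ (p ^ (n.totient * (j+1)))) := by
    intro j
    set k : ℕ := n.totient * (j+1) with hk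
    have hpow : u ^ (p ^ k) = u := by
      have hmod : p ^ k ≡ 1 [MOD n] := by
        have h1 : p ^ n.totient ≡ 1 [MOD n] := Nat.ModEq.pow_totient hpn
        have h2 : (p ^ n.totient) ^ (j+1) ≡ 1 ^ (j+1) [MOD n] := h1.pow (j+1)
        rw [one_pow, ← pow_mul] at h2
        rwa [hk]
      have hα2 : α ^ (p ^ k) = α ^ 1 := by
        rw [pow_eq_pow_iff_modEq]
        rw [← hn]
        simpa using hmod
      calc u ^ (p ^ k) = ((α ^ (p ^ k) : (MonoidAlgebra ℤ G)ˣ) : MonoidAlgebra ℤ G) := by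
            rw [hu, Units.val_pow_eq_pow_val]
      _ = ((α ^ 1 : (MonoidAlgebra ℤ G)ˣ) : MonoidAlgebra ℤ G) := by rw [hα2]
      _ = u := by rw [pow_one, hu]
    have hiter := frobenius_iter hp χ hχclass k u
    rw [hpow, htrc_pair] at hiter
    by_contra hno
    push_neg at hno
    have hzero : pairF (fun h => χ (h ^ p ^ k)) u = 0 := by
      rw [pairF_apply]
      apply Finset.sum_eq_zero
      intro h hh
      simp only [hχ]
      rw [if_neg (hno h hh), zero_mul]
    rw [hzero, sub_zero] at hiter
    exact hptrc hiter
  choose hfun hmem hconj using hkey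
  -- the contradiction from two equal choices
  have hfinal : ∀ ja jb : ℕ, ja < jb → hfun ja = hfun jb → False := by
    intro ja jb hab hfeq
    set ka : ℕ := n.totient * (ja+1) with hka
    set kb : ℕ := n.totient * (jb+1) with hkb
    have htot : 0 < n.totient := Nat.totient_pos.mpr hnpos
    have hkab : ka < kb := by
      rw [hka, hkb]
      have : ja + 1 < jb + 1 := by omega
      exact (Nat.mul_lt_mul_left htot).mpr this
    set aa : G := (hfun ja) ^ (p ^ ka) with haa
    have hconj1 : IsConj g aa := hconj ja
    have hconj2 : IsConj g ((hfun ja) ^ (p ^ kb)) := by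
      rw [hfeq]
      exact hconj jb
    set Q : ℕ := p ^ (kb - ka) with hQdef
    have hQpow : (hfun ja) ^ (p ^ kb) = aa ^ Q := by
      rw [haa, hQdef, ← pow_mul, ← pow_add]
      congr 2
      omega
    have hQ2 : 2 ≤ Q := by
      rw [hQdef]
      calc 2 ≤ p := hp.two_le
      _ ≤ p ^ (kb - ka) := Nat.le_self_pow (by omega) p
    have haainf : ¬ IsOfFinOrder aa := by
      intro hfin
      apply hg
      obtain ⟨cc, hcc⟩ := isConj_iff.mp hconj1
      have hgeq : g = (MulAut.conj cc⁻¹) aa := by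
        rw [← hcc]
        simp only [MulAut.conj_apply]
        group
      rw [hgeq]
      exact (MulAut.conj cc⁻¹).toMonoidHom.isOfFinOrder hfin
    have hconjaa : IsConj aa (aa ^ Q) := by
      apply hconj1.symm.trans
      rw [← hQpow]
      exact hconj2
    obtain ⟨xx, hxx⟩ := isConj_iff.mp hconjaa
    exact no_bs_pair H hHnorm hHfin hHnoeth aa xx Q hQ2 haainf hxx
  have hmaps : ∀ j ∈ Finset.range (u.coeff.support.card + 1), hfun j ∈ u.coeff.support :=
    fun j _ => hmem j
  obtain ⟨j1, hj1, j2, hj2, hne, heq⟩ :=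
    Finset.exists_ne_map_eq_of_card_lt_of_maps_to
      (by rw [Finset.card_range]; omega) hmaps
  rcases lt_or_gt_of_ne hne with hlt | hgt
  · exact hfinal j1 j2 hlt heq
  · exact hfinal j2 j1 hgt heq.symm
end

section
/- Let D∞ be the infinite dihedral group. Then every non-trivial finite subgroup of U₁(ℤD∞) has order 2. -/
open scoped Classical

namespace InfDihAux
noncomputable section
open DihedralGroup Matrix Polynomial

def toZ : ZMod 0 → ℤ := id
lemma toZ_add (i j : ZMod 0) : toZ (i + j) = toZ i + toZ j := rfl
lemma toZ_sub (i j : ZMod 0) : toZ (i - j) = toZ i - toZ j := rfl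
lemma toZ_zero : toZ 0 = 0 := rfl

variable (x : ℝ)

def phi (hx : x ≠ 0) : DihedralGroup 0 →* Matrix (Fin 2) (Fin 2) ℝ where
  toFun g := match g with
    | .r i => !![x ^ toZ i, 0; 0, x ^ (-toZ i)]
    | .sr i => !![0, x ^ (-toZ i); x ^ toZ i, 0]
  map_one' := by
    show !![x ^ toZ 0, 0; 0, x ^ (-toZ 0)] = 1
    norm_num [toZ_zero]
    exact (Matrix.one_fin_two).symm
  map_mul' := by
    rintro (i | i) (j | j) <;>
      simp only [r_mul_r, r_mul_sr, sr_mul_r, sr_mul_sr, toZ_add, toZ_sub] <;>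
      rw [Matrix.mul_fin_two] <;>
      norm_num [zpow_add₀ hx, zpow_sub₀ hx, _root_.zpow_neg, mul_comm, div_eq_mul_inv]

variable (hx : x ≠ 0)

@[simp] lemma phi_r_00 (i) : phi x hx (.r i) 0 0 = x ^ toZ i := rfl
@[simp] lemma phi_r_01 (i) : phi x hx (.r i) 0 1 = 0 := rfl
@[simp] lemma phi_r_10 (i) : phi x hx (.r i) 1 0 = 0 := rfl
@[simp] lemma phi_r_11 (i) : phi x hx (.r i) 1 1 = x ^ (-toZ i) := rfl
@[simp] lemma phi_sr_00 (i) : phi x hx (.sr i) 0 0 = 0 := rfl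
@[simp] lemma phi_sr_01 (i) : phi x hx (.sr i) 0 1 = x ^ (-toZ i) := rfl
@[simp] lemma phi_sr_10 (i) : phi x hx (.sr i) 1 0 = x ^ toZ i := rfl
@[simp] lemma phi_sr_11 (i) : phi x hx (.sr i) 1 1 = 0 := rfl

abbrev Rinf := MonoidAlgebra ℤ (DihedralGroup 0)

def rho : Rinf →ₐ[ℤ] Matrix (Fin 2) (Fin 2) ℝ :=
  MonoidAlgebra.lift ℤ _ _ (phi x hx)

lemma rho_entry (α : Rinf) (p q : Fin 2) :
    rho x hx α p q = ∑ g ∈ α.coeff.support, (α.coeff g : ℝ) * phi x hx g p q := by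
  rw [rho, MonoidAlgebra.lift_apply, Finsupp.sum, Matrix.sum_apply]
  exact Finset.sum_congr rfl fun g _ => by simp [Matrix.smul_apply, zsmul_eq_mul]

lemma li (hxt : Transcendental ℤ x) {S : Finset ℤ} {c : ℤ → ℤ}
    (h : ∑ i ∈ S, (c i : ℝ) * x ^ i = 0) : ∀ i ∈ S, c i = 0 := by
  have hx0 : x ≠ 0 := by rintro rfl; exact hxt isAlgebraic_zero
  by_contra hc
  push_neg at hc
  obtain ⟨i₀, hi₀S, hi₀⟩ := hc
  set N : ℤ := S.inf' ⟨i₀, hi₀S⟩ id with hNdef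
  have hN : ∀ i ∈ S, 0 ≤ i - N := fun i hi => sub_nonneg.2 (Finset.inf'_le id hi)
  set P : Polynomial ℤ := ∑ i ∈ S, C (c i) * X ^ (i - N).toNat with hPdef
  have hP0 : P ≠ 0 := by
    intro h0
    have hco : P.coeff (i₀ - N).toNat = c i₀ := by
      rw [hPdef, Polynomial.finset_sum_coeff]
      rw [Finset.sum_eq_single i₀]
      · simp
      · intro i hi hne
        have hnn := hN i hi
        have hnn0 := hN i₀ hi₀S
        have hne' : ¬ ((i₀ - N).toNat = (i - N).toNat) := fun he => hne (by omega)
        simp [Polynomial.coeff_C_mul, Polynomial.coeff_X_pow, if_neg hne']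
      · intro hni; exact absurd hi₀S hni
    rw [h0] at hco
    simp at hco
    exact hi₀ hco.symm
  have heval : Polynomial.aeval x P = 0 := by
    rw [hPdef, map_sum]
    have hterm : ∀ i ∈ S, Polynomial.aeval x (C (c i) * X ^ (i - N).toNat)
        = (c i : ℝ) * x ^ i * (x ^ N)⁻¹ := by
      intro i hi
      rw [_root_.map_mul, _root_.map_pow, Polynomial.aeval_C, Polynomial.aeval_X]
      rw [← zpow_natCast x, Int.toNat_of_nonneg (hN i hi), zpow_sub₀ hx0]
      simp [algebraMap_int_eq, div_eq_mul_inv, mul_assoc]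
    rw [Finset.sum_congr rfl hterm, ← Finset.sum_mul, h, zero_mul]
  exact hxt ⟨P, hP0, heval⟩

lemma rho_inj (hxt : Transcendental ℤ x) : Function.Injective (rho x hx) := by
  rw [injective_iff_map_eq_zero]
  intro α hα
  have hr : Function.Injective (DihedralGroup.r : ZMod 0 → DihedralGroup 0) :=
    fun a b h => by injection h
  have hsr : Function.Injective (DihedralGroup.sr : ZMod 0 → DihedralGroup 0) :=
    fun a b h => by injection h
  ext g
  show α.coeff g = 0
  cases g with
  | r k =>
    have h00 : ∑ g ∈ α.coeff.support, (α.coeff g : ℝ) * phi x hx g 0 0 = 0 := by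
      rw [← rho_entry, hα]; rfl
    have h2 := Finset.sum_preimage DihedralGroup.r α.coeff.support hr.injOn
      (fun g => (α.coeff g : ℝ) * phi x hx g 0 0) (by
        intro g hg hgr
        cases g with
        | r i => exact absurd ⟨i, rfl⟩ hgr
        | sr i => simp)
    rw [h00] at h2
    simp only [phi_r_00] at h2
    have h3 := li x hxt (S := (α.coeff.support.preimage DihedralGroup.r hr.injOn : Finset (ZMod 0)))
      (c := fun i => α.coeff (.r i)) h2
    by_cases hk : DihedralGroup.r k ∈ α.coeff.support
    · exact h3 k (Finset.mem_preimage.2 hk)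
    · exact Finsupp.notMem_support_iff.1 hk
  | sr k =>
    have h00 : ∑ g ∈ α.coeff.support, (α.coeff g : ℝ) * phi x hx g 1 0 = 0 := by
      rw [← rho_entry, hα]; rfl
    have h2 := Finset.sum_preimage DihedralGroup.sr α.coeff.support hsr.injOn
      (fun g => (α.coeff g : ℝ) * phi x hx g 1 0) (by
        intro g hg hgr
        cases g with
        | r i => simp
        | sr i => exact absurd ⟨i, rfl⟩ hgr)
    rw [h00] at h2
    simp only [phi_sr_10] at h2
    have h3 := li x hxt (S := (α.coeff.support.preimage DihedralGroup.sr hsr.injOn : Finset (ZMod 0)))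
      (c := fun i => α.coeff (.sr i)) h2
    by_cases hk : DihedralGroup.sr k ∈ α.coeff.support
    · exact h3 k (Finset.mem_preimage.2 hk)
    · exact Finsupp.notMem_support_iff.1 hk


lemma mulVec_pow {M : Matrix (Fin 2) (Fin 2) ℂ} {z : ℂ} {v : Fin 2 → ℂ}
    (hv : M.mulVec v = z • v) : ∀ k : ℕ, (M ^ k).mulVec v = z ^ k • v := by
  intro k
  induction k with
  | zero => simp
  | succ k ih =>
    rw [pow_succ, ← Matrix.mulVec_mulVec, hv, Matrix.mulVec_smul, ih, smul_smul, pow_succ]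
    ring_nf

lemma root_pow_eq_one {n : ℕ} {M : Matrix (Fin 2) (Fin 2) ℂ} (hM : M ^ n = 1)
    {z : ℂ} (hz : z * z - Matrix.trace M * z + M.det = 0) : z ^ n = 1 := by
  have hdet : (z • (1 : Matrix (Fin 2) (Fin 2) ℂ) - M).det = 0 := by
    rw [Matrix.det_fin_two]
    simp only [Matrix.sub_apply, Matrix.smul_apply, Matrix.one_apply, Matrix.trace_fin_two,
      Matrix.det_fin_two] at hz ⊢
    norm_num
    linear_combination hz
  obtain ⟨v, hv0, hv⟩ := Matrix.exists_mulVec_eq_zero_iff.2 hdet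
  have hMv : M.mulVec v = z • v := by
    rw [Matrix.sub_mulVec, Matrix.smul_mulVec, Matrix.one_mulVec, sub_eq_zero] at hv
    exact hv.symm
  have hvn := mulVec_pow hMv n
  rw [hM, Matrix.one_mulVec] at hvn
  obtain ⟨i, hi⟩ := Function.ne_iff.1 hv0
  have hvi : v i = z ^ n * v i := congrFun hvn i
  have : (z ^ n - 1) * v i = 0 := by linear_combination -hvi
  rcases mul_eq_zero.1 this with h | h
  · exact sub_eq_zero.1 h
  · exact absurd h hi


lemma eigen {n : ℕ} (M : Matrix (Fin 2) (Fin 2) ℂ) (hM : M ^ n = 1) :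
    ∃ z w : ℂ, z ^ n = 1 ∧ w ^ n = 1 ∧ Matrix.trace M = z + w := by
  obtain ⟨z, hz⟩ := Complex.exists_root
    (f := X ^ 2 - C (Matrix.trace M) * X + C M.det) (by
      have hdeg : (X ^ 2 - C (Matrix.trace M) * X + C M.det).degree = 2 := by compute_degree!
      rw [hdeg]; norm_num)
  have hz' : z * z - Matrix.trace M * z + M.det = 0 := by
    have := hz
    simp only [Polynomial.IsRoot, Polynomial.eval_add, Polynomial.eval_sub, Polynomial.eval_pow,
      Polynomial.eval_mul, Polynomial.eval_C, Polynomial.eval_X, sq] at this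
    linear_combination this
  have hw' : (Matrix.trace M - z) * (Matrix.trace M - z)
      - Matrix.trace M * (Matrix.trace M - z) + M.det = 0 := by linear_combination hz'
  exact ⟨z, Matrix.trace M - z, root_pow_eq_one hM hz', root_pow_eq_one hM hw', by ring⟩

lemma ch2 {α : Type*} [CommRing α] (M : Matrix (Fin 2) (Fin 2) α) :
    M * M - Matrix.trace M • M + M.det • (1 : Matrix (Fin 2) (Fin 2) α) = 0 := by
  ext i j
  fin_cases i <;> fin_cases j <;>
    simp [Matrix.mul_apply, Fin.sum_univ_two, Matrix.trace_fin_two, Matrix.det_fin_two,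
      Matrix.one_apply] <;> ring

lemma real_pm_one {n : ℕ} (hn : n ≠ 0) {d : ℝ} (h : d ^ n = 1) : d = 1 ∨ d = -1 := by
  rcases (pow_eq_one_iff_of_ne_zero hn).1 h with h1 | ⟨h2, _⟩
  · exact Or.inl h1
  · exact Or.inr h2

def Tset (n : ℕ) : Set ℝ := {t | ∃ z w : ℂ, z ^ n = 1 ∧ w ^ n = 1 ∧ (t : ℂ) = z + w}

lemma Tset_finite {n : ℕ} (hn : 0 < n) : (Tset n).Finite := by
  have h1 : {z : ℂ | z ^ n = 1}.Finite := by
    refine (Polynomial.finite_setOf_isRoot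
      (p := (X : ℂ[X]) ^ n - C 1) (Polynomial.X_pow_sub_C_ne_zero hn 1)).subset ?_
    intro z hz
    simp only [Set.mem_setOf_eq] at hz ⊢
    simp [Polynomial.IsRoot, hz]
  have h2 : (Set.image2 (· + ·) {z : ℂ | z ^ n = 1} {z : ℂ | z ^ n = 1}).Finite :=
    h1.image2 _ h1
  have h3 := (h2.preimage (f := fun t : ℝ => (t : ℂ)) Complex.ofReal_injective.injOn)
  refine h3.subset ?_
  rintro t ⟨z, w, hz, hw, ht⟩
  exact Set.mem_preimage.2 (ht ▸ Set.mem_image2_of_mem hz hw)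


def x0 : ℝ := liouvilleNumber 3

lemma x0_trans : Transcendental ℤ x0 := transcendental_liouvilleNumber (by norm_num)

lemma x0_pos : 0 < x0 :=
  Summable.tsum_pos (LiouvilleNumber.summable (by norm_num)) (fun i => by positivity) 0 (by positivity)

lemma x0_ne : x0 ≠ 0 := ne_of_gt x0_pos

/-! trace as a function of the parameter -/

def tE : DihedralGroup 0 → ℝ → ℝ := fun g ξ =>
  match g with
  | .r i => ξ ^ toZ i + ξ ^ (-toZ i)
  | .sr _ => 0

def ftr (α : Rinf) (ξ : ℝ) : ℝ := ∑ g ∈ α.coeff.support, (α.coeff g : ℝ) * tE g ξ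

lemma ftr_eq {ξ : ℝ} (hξ : ξ ≠ 0) (α : Rinf) :
    ftr α ξ = Matrix.trace (rho ξ hξ α) := by
  rw [Matrix.trace_fin_two, rho_entry, rho_entry, ← Finset.sum_add_distrib, ftr]
  refine Finset.sum_congr rfl fun g _ => ?_
  cases g with
  | r i => rw [phi_r_00, phi_r_11, tE]; ring
  | sr i => rw [phi_sr_00, phi_sr_11, tE]; ring

lemma ftr_cont (α : Rinf) : ContinuousOn (ftr α) {ξ : ℝ | ξ ≠ 0} := by
  refine continuousOn_finset_sum _ fun g _ => continuousOn_const.mul ?_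
  cases g with
  | r i =>
    refine ContinuousOn.add ?_ ?_ <;>
      exact fun ξ hξ => (continuousAt_zpow₀ ξ _ (Or.inl hξ)).continuousWithinAt
  | sr i => exact continuousOn_const

def cE : DihedralGroup 0 → ℤ := fun g => match g with | .r _ => 2 | .sr _ => 0

def cc (α : Rinf) : ℤ := ∑ g ∈ α.coeff.support, α.coeff g * cE g

lemma ftr_one (α : Rinf) : ftr α 1 = (cc α : ℝ) := by
  rw [ftr, cc]
  push_cast
  refine Finset.sum_congr rfl fun g _ => ?_
  cases g with
  | r i => rw [tE, cE]; norm_num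
  | sr i => rw [tE, cE]; norm_num

lemma trace_mem {n : ℕ} {ξ : ℝ} (hξ : ξ ≠ 0) {α : Rinf} (hα : α ^ n = 1) :
    Matrix.trace (rho ξ hξ α) ∈ Tset n := by
  set M := rho ξ hξ α with hM
  have hMn : M ^ n = 1 := by rw [hM, ← map_pow, hα, _root_.map_one]
  set Mc := (algebraMap ℝ ℂ).mapMatrix M with hMc
  have hMcn : Mc ^ n = 1 := by rw [hMc, ← map_pow, hMn, _root_.map_one]
  obtain ⟨z, w, hz, hw, ht⟩ := eigen Mc hMcn
  refine ⟨z, w, hz, hw, ?_⟩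
  rw [← ht, hMc]
  simp [Matrix.trace_fin_two, RingHom.mapMatrix_apply, Matrix.map_apply]

lemma ftr_const {n : ℕ} (hn : 0 < n) {α : Rinf} (hα : α ^ n = 1) :
    ftr α x0 = ftr α 1 := by
  by_contra hne
  have hsub : Set.uIcc x0 (1 : ℝ) ⊆ {ξ : ℝ | ξ ≠ 0} := by
    intro ξ hξ
    rcases Set.mem_uIcc.1 hξ with ⟨h1, _⟩ | ⟨h1, _⟩
    · exact ne_of_gt (lt_of_lt_of_le x0_pos h1)
    · exact ne_of_gt (lt_of_lt_of_le one_pos h1)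
  have hiv := intermediate_value_uIcc ((ftr_cont α).mono hsub)
  have himg : ftr α '' Set.uIcc x0 1 ⊆ Tset n := by
    rintro t ⟨ξ, hξ, rfl⟩
    have hξ0 : ξ ≠ 0 := hsub hξ
    rw [ftr_eq hξ0]
    exact trace_mem hξ0 hα
  have hfin : (Set.uIcc (ftr α x0) (ftr α 1)).Finite :=
    (Tset_finite hn).subset (hiv.trans himg)
  rw [Set.uIcc] at hfin
  exact Set.Icc_infinite (inf_lt_sup.2 hne) hfin


lemma torsion_sq (u : Rinfˣ) (haug : aug (DihedralGroup 0) ↑u = 1) {n : ℕ} (hn : 0 < n)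
    (hun : u ^ n = 1) :
    u ^ 2 = 1 ∧ ((u : Rinfˣ) ≠ 1 → (rho x0 x0_ne ↑u).det = -1) := by
  have hcoe : ((u : Rinf)) ^ n = 1 := by
    have h := congrArg (Units.val) hun
    simpa using h
  set M := rho x0 x0_ne ↑u with hMdef
  have hMn : M ^ n = 1 := by rw [hMdef, ← map_pow, hcoe, _root_.map_one]
  have hdet1 : M.det ^ n = 1 := by rw [← Matrix.det_pow, hMn, Matrix.det_one]
  have htr : Matrix.trace M = ((cc ↑u : ℤ) : ℝ) := by
    rw [hMdef, ← ftr_eq x0_ne, ftr_const hn hcoe, ftr_one]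
  obtain ⟨d, hd, hdpm⟩ : ∃ d : ℤ, M.det = (d : ℝ) ∧ (d = 1 ∨ d = -1) := by
    rcases real_pm_one hn.ne' hdet1 with h | h
    · exact ⟨1, by simpa using h, Or.inl rfl⟩
    · exact ⟨-1, by simpa using h, Or.inr rfl⟩
  have hE : (↑u : Rinf) * ↑u - (cc ↑u) • (↑u : Rinf) + d • (1 : Rinf) = 0 := by
    apply rho_inj x0 x0_ne x0_trans
    rw [map_add, map_sub, _root_.map_mul, map_zsmul, map_zsmul, _root_.map_one, map_zero]
    have hch := ch2 M
    rw [htr, hd, Int.cast_smul_eq_zsmul, Int.cast_smul_eq_zsmul] at hch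
    rw [← hMdef]
    exact hch
  have haugE := congrArg (aug (DihedralGroup 0)) hE
  rw [map_add, map_sub, _root_.map_mul, map_zsmul, map_zsmul, _root_.map_one, map_zero,
    haug] at haugE
  have hccd : cc (↑u : Rinf) = 1 + d := by
    simp only [smul_eq_mul, mul_one, one_mul] at haugE
    omega
  rcases hdpm with hd1 | hdm1
  · -- d = 1 : u is unipotent, hence 1
    have hcc2 : cc (↑u : Rinf) = 2 := by omega
    rw [hcc2, hd1] at hE
    set ε : Rinf := (↑u : Rinf) - 1 with hεdef
    have hu1 : (↑u : Rinf) = 1 + ε := by rw [hεdef]; abel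
    have hε2 : ε * ε = 0 := by
      have hx : ε * ε = (↑u : Rinf) * ↑u - (2 : ℤ) • (↑u : Rinf) + (1 : ℤ) • (1 : Rinf) := by
        rw [two_zsmul, one_zsmul, hεdef]
        noncomm_ring
      rw [hx]
      exact hE
    have hpow : ∀ k : ℕ, (↑u : Rinf) ^ k = 1 + (k : ℤ) • ε := by
      intro k
      induction k with
      | zero => simp
      | succ k ih =>
        rw [pow_succ, ih, hu1, mul_add, add_mul, add_mul, one_mul, mul_one,
          smul_mul_assoc, hε2, smul_zero]
        push_cast
        rw [add_smul, one_smul]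
        simp only [one_mul, hεdef]
        abel
    have hnε : (n : ℤ) • ε = 0 := by
      have h := hpow n
      rw [hcoe] at h
      exact (add_eq_left).1 h.symm
    have hε0 : ε = 0 := by
      apply rho_inj x0 x0_ne x0_trans
      rw [map_zero]
      have h2 : (n : ℤ) • rho x0 x0_ne ε = 0 := by rw [← map_zsmul, hnε, map_zero]
      have hn0 : ((n : ℤ) : ℝ) ≠ 0 := by exact_mod_cast hn.ne'
      rw [← Int.cast_smul_eq_zsmul ℝ] at h2
      exact (smul_eq_zero.1 h2).resolve_left hn0
    have huv1 : (↑u : Rinf) = 1 := by rw [hu1, hε0, add_zero]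
    have hu_one : u = 1 := Units.val_eq_one.1 huv1
    exact ⟨by rw [hu_one, one_pow], fun h => absurd hu_one h⟩
  · -- d = -1 : u is an involution
    have hcc0 : cc (↑u : Rinf) = 0 := by omega
    rw [hcc0, hdm1] at hE
    simp only [zero_smul, sub_zero, neg_smul, one_zsmul] at hE
    have huu : (↑u : Rinf) * ↑u = 1 := by rwa [add_neg_eq_zero] at hE
    have hsq : u ^ 2 = 1 := by
      apply Units.val_eq_one.1
      rw [Units.val_pow_eq_pow_val, pow_two, huu]
    exact ⟨hsq, fun _ => by rw [hd, hdm1]; norm_num⟩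


end
end InfDihAux

/-- Every non-trivial finite subgroup of `U₁(ℤ D∞)`, where `D∞ = DihedralGroup 0`
is the infinite dihedral group, has order 2. -/
theorem card_finite_subgroup_infinite_dihedral
    (A : Subgroup (MonoidAlgebra ℤ (DihedralGroup 0))ˣ)
    (hA : ∀ a ∈ A, aug (DihedralGroup 0) ↑a = 1)
    (hAfin : Finite A) (hAne : A ≠ ⊥) :
    Nat.card A = 2 := by
  classical
  haveI := hAfin
  rcases A.bot_or_exists_ne_one with hbot | ⟨u, huA, hu1⟩
  · exact absurd hbot hAne
  have haux : ∀ a ∈ A, a ^ 2 = 1 ∧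
      (a ≠ 1 → (InfDihAux.rho InfDihAux.x0 InfDihAux.x0_ne ↑a).det = -1) := by
    intro a ha
    have hn : 0 < orderOf (⟨a, ha⟩ : A) := orderOf_pos _
    have hpow : (⟨a, ha⟩ : A) ^ orderOf (⟨a, ha⟩ : A) = 1 := pow_orderOf_eq_one _
    have hpow' : a ^ orderOf (⟨a, ha⟩ : A) = 1 := by
      have h := congrArg (Subtype.val) hpow
      rw [SubmonoidClass.coe_pow] at h
      exact h
    exact InfDihAux.torsion_sq a (hA a ha) hn hpow'
  have husq : u ^ 2 = 1 := (haux u huA).1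
  have huniq : ∀ v ∈ A, v ≠ 1 → v = u := by
    intro v hvA hv1
    by_contra hvu
    have hwA : u * v ∈ A := A.mul_mem huA hvA
    have hw1 : u * v ≠ 1 := by
      intro h
      apply hvu
      have huu : u * u = 1 := by rw [← pow_two]; exact husq
      rw [(inv_eq_of_mul_eq_one_right h).symm, inv_eq_of_mul_eq_one_right huu]
    have hdet := (haux _ hwA).2 hw1
    have hdu := (haux u huA).2 hu1
    have hdv := (haux v hvA).2 hv1
    have hmul : (InfDihAux.rho InfDihAux.x0 InfDihAux.x0_ne ↑(u * v)).det =
        (InfDihAux.rho InfDihAux.x0 InfDihAux.x0_ne ↑u).det * (InfDihAux.rho InfDihAux.x0 InfDihAux.x0_ne ↑v).det := by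
      rw [Units.val_mul, _root_.map_mul, Matrix.det_mul]
    rw [hdet, hdu, hdv] at hmul
    norm_num at hmul
  rw [Nat.card_eq_two_iff]
  refine ⟨⟨1, A.one_mem⟩, ⟨u, huA⟩, ?_, ?_⟩
  · intro h
    exact hu1 (congrArg Subtype.val h).symm
  · ext ⟨v, hv⟩
    simp only [Set.mem_insert_iff, Set.mem_singleton_iff, Set.mem_univ, iff_true]
    by_cases h1 : v = 1
    · left; exact Subtype.ext h1
    · right; exact Subtype.ext (huniq v hv h1)
end

section
/- Let G be a group generated by an abelian subgroup A and an element t ∈ G such that t² ∈ A and t⁻¹at = a⁻¹ for every a ∈ A. Then for every g ∈ G with g ∉ A, the subgroup K(g) = [g, G] equals the set {a² : a ∈ A}. -/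
/-- `K(g) = [g, G]`, the subgroup generated by the commutators `[g, x] = g⁻¹x⁻¹gx`. -/
def Kcomm {G : Type*} [Group G] (g : G) : Subgroup G :=
  Subgroup.closure {c : G | ∃ x : G, c = g⁻¹ * x⁻¹ * g * x}

/-- Let `G` be generated by an abelian subgroup `A` and an element `t` with `t² ∈ A`
and `t⁻¹at = a⁻¹` for all `a ∈ A`. Then for every `g ∉ A`,
`K(g) = [g, G]` equals `{a² : a ∈ A}`. -/
theorem Kcomm_eq_squares {G : Type*} [Group G] (A : Subgroup G) (t : G)
    (hab : ∀ a ∈ A, ∀ b ∈ A, a * b = b * a)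
    (ht2 : t ^ 2 ∈ A) (htinv : ∀ a ∈ A, t⁻¹ * a * t = a⁻¹)
    (hgen : Subgroup.closure ((A : Set G) ∪ {t}) = ⊤)
    (g : G) (hg : g ∉ A) :
    (Kcomm g : Set G) = {b : G | ∃ a ∈ A, b = a * a} := by
  -- basic commutation relations
  have hmti : ∀ c ∈ A, t⁻¹ * c = c⁻¹ * t⁻¹ := by
    intro c hc
    refine mul_right_cancel (b := t) ?_
    rw [htinv c hc, mul_assoc, inv_mul_cancel, mul_one]
  have hmt : ∀ c ∈ A, t * c = c⁻¹ * t := by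
    intro c hc
    refine mul_left_cancel (a := t⁻¹) ?_
    rw [← mul_assoc, ← mul_assoc, inv_mul_cancel, one_mul,
      hmti c⁻¹ (A.inv_mem hc), inv_inv, mul_assoc, inv_mul_cancel, mul_one]
  -- every element of G is in A or of the form a * t with a ∈ A
  have hall : ∀ x : G, x ∈ A ∨ ∃ a ∈ A, x = a * t := by
    intro x
    have hx : x ∈ Subgroup.closure ((A : Set G) ∪ {t}) := by
      rw [hgen]; exact Subgroup.mem_top x
    induction hx using Subgroup.closure_induction with
    | mem y hy =>
      rcases hy with hy | hy
      · exact Or.inl hy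
      · exact Or.inr ⟨1, A.one_mem, by simp [Set.mem_singleton_iff.mp hy]⟩
    | one => exact Or.inl A.one_mem
    | mul y z hy hz ihy ihz =>
      rcases ihy with hyA | ⟨a, ha, rfl⟩
      · rcases ihz with hzA | ⟨b, hb, rfl⟩
        · exact Or.inl (A.mul_mem hyA hzA)
        · exact Or.inr ⟨y * b, A.mul_mem hyA hb, by rw [mul_assoc]⟩
      · rcases ihz with hzA | ⟨b, hb, rfl⟩
        · refine Or.inr ⟨a * z⁻¹, A.mul_mem ha (A.inv_mem hzA), ?_⟩
          rw [mul_assoc, mul_assoc, hmt z hzA]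
        · refine Or.inl ?_
          have : a * t * (b * t) = (a * b⁻¹) * t ^ 2 := by
            rw [mul_assoc, ← mul_assoc t b, hmt b hb, pow_two]
            group
          rw [this]
          exact A.mul_mem (A.mul_mem ha (A.inv_mem hb)) ht2
    | inv y hy ihy =>
      rcases ihy with hyA | ⟨a, ha, rfl⟩
      · exact Or.inl (A.inv_mem hyA)
      · refine Or.inr ⟨a * (t ^ 2)⁻¹, A.mul_mem ha (A.inv_mem ht2), ?_⟩
        rw [mul_inv_rev, hmti a⁻¹ (A.inv_mem ha), inv_inv]
        group
  obtain ⟨a, ha, rfl⟩ : ∃ a ∈ A, g = a * t := (hall g).resolve_left hg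
  -- the commutator with an element of A
  have key1 : ∀ c ∈ A, (a * t)⁻¹ * c⁻¹ * (a * t) * c = c * c := by
    intro c hc
    have h1 : a⁻¹ * c⁻¹ = c⁻¹ * a⁻¹ := hab a⁻¹ (A.inv_mem ha) c⁻¹ (A.inv_mem hc)
    have h2 : t⁻¹ * c⁻¹ = c * t⁻¹ := by
      rw [hmti c⁻¹ (A.inv_mem hc), inv_inv]
    calc (a * t)⁻¹ * c⁻¹ * (a * t) * c
        = t⁻¹ * (a⁻¹ * c⁻¹) * (a * (t * c)) := by group
      _ = t⁻¹ * (c⁻¹ * a⁻¹) * (a * (t * c)) := by rw [h1]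
      _ = (t⁻¹ * c⁻¹) * (t * c) := by group
      _ = c * t⁻¹ * (t * c) := by rw [h2]
      _ = c * c := by group
  -- the commutator with an element b * t
  have key2 : ∀ b ∈ A, (a * t)⁻¹ * (b * t)⁻¹ * (a * t) * (b * t)
      = (b⁻¹ * a) * (b⁻¹ * a) := by
    intro b hb
    have hba : b⁻¹ * a ∈ A := A.mul_mem (A.inv_mem hb) ha
    have h1 : t * (b * t) = b⁻¹ * t ^ 2 := by
      rw [← mul_assoc, hmt b hb, pow_two]; group
    have h2 : b⁻¹ * (a * (b⁻¹ * t ^ 2)) = (b⁻¹ * a * b⁻¹) * t ^ 2 := by group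
    have hu : b⁻¹ * a * b⁻¹ ∈ A := A.mul_mem hba (A.inv_mem hb)
    have h3 : t⁻¹ * ((b⁻¹ * a * b⁻¹) * t ^ 2) = (b⁻¹ * a * b⁻¹)⁻¹ * t := by
      rw [← mul_assoc, hmti _ hu, pow_two]; group
    calc (a * t)⁻¹ * (b * t)⁻¹ * (a * t) * (b * t)
        = t⁻¹ * (a⁻¹ * (t⁻¹ * (b⁻¹ * (a * (t * (b * t)))))) := by group
      _ = t⁻¹ * (a⁻¹ * (t⁻¹ * (b⁻¹ * (a * (b⁻¹ * t ^ 2))))) := by rw [h1]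
      _ = t⁻¹ * (a⁻¹ * (t⁻¹ * ((b⁻¹ * a * b⁻¹) * t ^ 2))) := by rw [h2]
      _ = t⁻¹ * (a⁻¹ * ((b⁻¹ * a * b⁻¹)⁻¹ * t)) := by rw [h3]
      _ = t⁻¹ * ((a⁻¹ * (b⁻¹ * a * b⁻¹)⁻¹) * t) := by group
      _ = (a⁻¹ * (b⁻¹ * a * b⁻¹)⁻¹)⁻¹ := by
          rw [← mul_assoc, htinv _ (A.mul_mem (A.inv_mem ha) (A.inv_mem hu))]
      _ = b⁻¹ * a * b⁻¹ * a := by group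
      _ = (b⁻¹ * a) * (b⁻¹ * a) := by
          rw [mul_assoc (b⁻¹ * a), hab b⁻¹ (A.inv_mem hb) a ha, ← mul_assoc]
  -- the subgroup of squares of A
  let Asq : Subgroup G :=
  { carrier := {b : G | ∃ a ∈ A, b = a * a}
    one_mem' := ⟨1, A.one_mem, by simp⟩
    mul_mem' := by
      rintro x y ⟨c, hc, rfl⟩ ⟨d, hd, rfl⟩
      refine ⟨c * d, A.mul_mem hc hd, ?_⟩
      rw [mul_assoc c d, ← mul_assoc d, hab d hd c hc]
      group
    inv_mem' := by
      rintro x ⟨c, hc, rfl⟩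
      exact ⟨c⁻¹, A.inv_mem hc, by rw [mul_inv_rev]⟩ }
  apply Set.Subset.antisymm
  · intro x hx
    have hle : Kcomm (a * t) ≤ Asq := by
      rw [Kcomm, Subgroup.closure_le]
      rintro _ ⟨y, rfl⟩
      rcases hall y with hyA | ⟨b, hb, rfl⟩
      · exact ⟨y, hyA, key1 y hyA⟩
      · exact ⟨b⁻¹ * a, A.mul_mem (A.inv_mem hb) ha, key2 b hb⟩
    exact hle hx
  · rintro _ ⟨c, hc, rfl⟩
    exact Subgroup.subset_closure ⟨c, (key1 c hc).symm⟩
end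

section
/- Let G be a group generated by an abelian subgroup A and an element t ∈ G such that t² ∈ A and t⁻¹at = a⁻¹ for every a ∈ A. Then for every g ∈ G with g ∉ A, the coset gK(g) equals the conjugacy class C_g of g in G, where K(g) = [g, G]. -/
/-- Let `G` be generated by an abelian subgroup `A` and an element `t` with `t² ∈ A`
and `t⁻¹at = a⁻¹` for all `a ∈ A`. Then for every `g ∉ A`, the coset `g·K(g)`
equals the conjugacy class of `g` in `G`. -/
theorem coset_Kcomm_eq_conjClass {G : Type*} [Group G] (A : Subgroup G) (t : G)
    (hab : ∀ a ∈ A, ∀ b ∈ A, a * b = b * a)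
    (ht2 : t ^ 2 ∈ A) (htinv : ∀ a ∈ A, t⁻¹ * a * t = a⁻¹)
    (hgen : Subgroup.closure ((A : Set G) ∪ {t}) = ⊤)
    (g : G) (hg : g ∉ A) :
    {x : G | ∃ k ∈ Kcomm g, x = g * k} = {x : G | IsConj g x} := by
  have hC : ∀ x ∈ A, ∀ y ∈ A, Commute x y := fun x hx y hy => hab x hx y hy
  -- moving elements of A past t
  have hct : ∀ c ∈ A, c * t = t * c⁻¹ := by
    intro c hc
    calc c * t = t * (t⁻¹ * c * t) := by group
      _ = t * c⁻¹ := by rw [htinv c hc]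
  have htc : ∀ c ∈ A, t * c = c⁻¹ * t := by
    intro c hc
    have h := hct c⁻¹ (A.inv_mem hc)
    rw [inv_inv] at h
    exact h.symm
  have hcti : ∀ c ∈ A, c * t⁻¹ = t⁻¹ * c⁻¹ := by
    intro c hc
    calc c * t⁻¹ = t⁻¹ * (t * c) * t⁻¹ := by group
      _ = t⁻¹ * (c⁻¹ * t) * t⁻¹ := by rw [htc c hc]
      _ = t⁻¹ * c⁻¹ := by group
  -- decomposition of elements of G
  have hdec : ∀ x : G, x ∈ A ∨ ∃ b ∈ A, x = b * t := by
    intro x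
    have hx : x ∈ Subgroup.closure ((A : Set G) ∪ {t}) := by
      rw [hgen]; trivial
    induction hx using Subgroup.closure_induction with
    | mem y hy =>
        rcases hy with hy | hy
        · exact Or.inl hy
        · exact Or.inr ⟨1, A.one_mem, by simp [Set.mem_singleton_iff.mp hy]⟩
    | one => exact Or.inl A.one_mem
    | mul y z hy hz ihy ihz =>
        rcases ihy with hy' | ⟨b, hb, rfl⟩
        · rcases ihz with hz' | ⟨c, hc, rfl⟩
          · exact Or.inl (A.mul_mem hy' hz')
          · exact Or.inr ⟨y * c, A.mul_mem hy' hc, by group⟩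
        · rcases ihz with hz' | ⟨c, hc, rfl⟩
          · refine Or.inr ⟨b * z⁻¹, A.mul_mem hb (A.inv_mem hz'), ?_⟩
            calc b * t * z = b * (t * z) := by group
              _ = b * (z⁻¹ * t) := by rw [htc z hz']
              _ = b * z⁻¹ * t := by group
          · refine Or.inl ?_
            have h : b * t * (c * t) = b * c⁻¹ * t ^ 2 := by
              calc b * t * (c * t) = b * (t * c) * t := by group
                _ = b * (c⁻¹ * t) * t := by rw [htc c hc]
                _ = b * c⁻¹ * t ^ 2 := by rw [pow_two]; group
            rw [h]
            exact A.mul_mem (A.mul_mem hb (A.inv_mem hc)) ht2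
    | inv y hy ihy =>
        rcases ihy with hy' | ⟨b, hb, rfl⟩
        · exact Or.inl (A.inv_mem hy')
        · refine Or.inr ⟨b * (t ^ 2)⁻¹, A.mul_mem hb (A.inv_mem ht2), ?_⟩
          calc (b * t)⁻¹ = t⁻¹ * b⁻¹ := by group
            _ = b * t⁻¹ := (hcti b hb).symm
            _ = b * (t ^ 2)⁻¹ * t := by rw [pow_two]; group
  -- write g = a * t with a ∈ A
  obtain ⟨a, ha, hg_eq⟩ : ∃ a ∈ A, g = a * t := by
    rcases hdec g with h | h
    · exact absurd h hg
    · exact h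
  subst hg_eq
  set g := a * t with hg_def
  -- moving elements of A past g
  have L1 : ∀ b ∈ A, g * b = b⁻¹ * g := by
    intro b hb
    calc a * t * b = a * (t * b) := by group
      _ = a * (b⁻¹ * t) := by rw [htc b hb]
      _ = a * b⁻¹ * t := by group
      _ = b⁻¹ * a * t := by rw [hab a ha b⁻¹ (A.inv_mem hb)]
      _ = b⁻¹ * (a * t) := by group
  have L2 : ∀ b ∈ A, b * g = g * b⁻¹ := by
    intro b hb
    have h := L1 b⁻¹ (A.inv_mem hb)
    rw [inv_inv] at h
    exact h.symm
  have htg : t⁻¹ * g = a⁻¹ := by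
    calc t⁻¹ * (a * t) = t⁻¹ * a * t := by group
      _ = a⁻¹ := htinv a ha
  -- conjugacy of g with g·b²
  have hconj1 : ∀ b ∈ A, IsConj g (g * b ^ 2) := by
    intro b hb
    rw [isConj_iff]
    refine ⟨b⁻¹, ?_⟩
    calc b⁻¹ * g * b⁻¹⁻¹ = b⁻¹ * g * b := by rw [inv_inv]
      _ = g * b * b := by rw [L2 b⁻¹ (A.inv_mem hb), inv_inv]
      _ = g * b ^ 2 := by rw [pow_two, mul_assoc]
  -- conjugacy of g with g·a²b²
  have hconj2 : ∀ b ∈ A, IsConj g (g * (a ^ 2 * b ^ 2)) := by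
    intro b hb
    rw [isConj_iff]
    refine ⟨t⁻¹ * b, ?_⟩
    have hb2 : b⁻¹ * b⁻¹ ∈ A := A.mul_mem (A.inv_mem hb) (A.inv_mem hb)
    have ha2 : a⁻¹ * a⁻¹ ∈ A := A.mul_mem (A.inv_mem ha) (A.inv_mem ha)
    calc t⁻¹ * b * g * (t⁻¹ * b)⁻¹ = t⁻¹ * (b * g) * b⁻¹ * t := by group
      _ = t⁻¹ * (g * b⁻¹) * b⁻¹ * t := by rw [L2 b hb]
      _ = (t⁻¹ * g) * (b⁻¹ * b⁻¹ * t) := by group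
      _ = a⁻¹ * (b⁻¹ * b⁻¹ * t) := by rw [htg]
      _ = a⁻¹ * (t * (b⁻¹ * b⁻¹)⁻¹) := by rw [hct _ hb2]
      _ = a * (a⁻¹ * a⁻¹ * t) * (b⁻¹ * b⁻¹)⁻¹ := by
          simp only [mul_inv_rev, inv_inv, mul_assoc, inv_mul_cancel_left, mul_inv_cancel_left]
      _ = a * (t * (a⁻¹ * a⁻¹)⁻¹) * (b⁻¹ * b⁻¹)⁻¹ := by rw [hct _ ha2]
      _ = g * (a ^ 2 * b ^ 2) := by
          rw [hg_def, pow_two, pow_two]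
          simp only [mul_inv_rev, inv_inv, mul_assoc]
  -- characterization of elements of K(g)
  have hK : ∀ k ∈ Kcomm g, ∃ b ∈ A, k = b ^ 2 ∨ k = a ^ 2 * b ^ 2 := by
    intro k hk
    induction hk using Subgroup.closure_induction with
    | mem c hc =>
        obtain ⟨x, rfl⟩ := hc
        rcases hdec x with hx | ⟨b, hb, rfl⟩
        · -- commutator with x ∈ A is x²
          refine ⟨x, hx, Or.inl ?_⟩
          have h := L2 x⁻¹ (A.inv_mem hx)
          rw [inv_inv] at h
          calc g⁻¹ * x⁻¹ * g * x = g⁻¹ * (x⁻¹ * g) * x := by group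
            _ = g⁻¹ * (g * x) * x := by rw [h]
            _ = x ^ 2 := by rw [pow_two]; group
        · -- commutator with b*t is a²b⁻²
          refine ⟨b⁻¹, A.inv_mem hb, Or.inr ?_⟩
          have hbg : b⁻¹ * g = g * b := by
            have h := L2 b⁻¹ (A.inv_mem hb); rwa [inv_inv] at h
          have hab2 : a⁻¹ * a⁻¹ * (b * b) ∈ A :=
            A.mul_mem (A.mul_mem (A.inv_mem ha) (A.inv_mem ha)) (A.mul_mem hb hb)
          calc g⁻¹ * (b * t)⁻¹ * g * (b * t)
              = g⁻¹ * t⁻¹ * (b⁻¹ * g) * b * t := by group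
            _ = g⁻¹ * t⁻¹ * (g * b) * b * t := by rw [hbg]
            _ = g⁻¹ * (t⁻¹ * g) * (b * b) * t := by group
            _ = g⁻¹ * a⁻¹ * (b * b) * t := by rw [htg]
            _ = t⁻¹ * (a⁻¹ * a⁻¹ * (b * b)) * t := by
                rw [hg_def]; simp only [mul_inv_rev, mul_assoc]
            _ = (a⁻¹ * a⁻¹ * (b * b))⁻¹ := htinv _ hab2
            _ = (b * b)⁻¹ * (a * a) := by simp only [mul_inv_rev, inv_inv, mul_assoc]
            _ = a * a * (b * b)⁻¹ := hab _ (A.inv_mem (A.mul_mem hb hb)) _ (A.mul_mem ha ha)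
            _ = a ^ 2 * b⁻¹ ^ 2 := by
                rw [pow_two, pow_two]; simp only [mul_inv_rev, mul_assoc]
    | one => exact ⟨1, A.one_mem, Or.inl (by simp)⟩
    | mul y z hy hz ihy ihz =>
        obtain ⟨b, hb, hy'⟩ := ihy
        obtain ⟨c, hc, hz'⟩ := ihz
        rcases hy' with rfl | rfl <;> rcases hz' with rfl | rfl
        · exact ⟨b * c, A.mul_mem hb hc, Or.inl ((hC b hb c hc).mul_pow 2).symm⟩
        · refine ⟨b * (a * c), A.mul_mem hb (A.mul_mem ha hc), Or.inl ?_⟩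
          rw [← (hC a ha c hc).mul_pow, ← (hC b hb (a * c) (A.mul_mem ha hc)).mul_pow]
        · refine ⟨b * c, A.mul_mem hb hc, Or.inr ?_⟩
          calc a ^ 2 * b ^ 2 * c ^ 2 = a ^ 2 * (b ^ 2 * c ^ 2) := by group
            _ = a ^ 2 * (b * c) ^ 2 := by rw [(hC b hb c hc).mul_pow]
        · refine ⟨b * (a * c), A.mul_mem hb (A.mul_mem ha hc), Or.inr ?_⟩
          rw [mul_assoc, ← (hC a ha c hc).mul_pow,
            ← (hC b hb (a * c) (A.mul_mem ha hc)).mul_pow]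
    | inv y hy ihy =>
        obtain ⟨b, hb, hy'⟩ := ihy
        rcases hy' with rfl | rfl
        · exact ⟨b⁻¹, A.inv_mem hb, Or.inl (inv_pow b 2).symm⟩
        · refine ⟨b⁻¹ * a⁻¹, A.mul_mem (A.inv_mem hb) (A.inv_mem ha), Or.inl ?_⟩
          have e1 : (a ^ 2 * b ^ 2)⁻¹ = (b⁻¹) ^ 2 * (a⁻¹) ^ 2 := by
            rw [mul_inv_rev, ← inv_pow, ← inv_pow]
          have e2 : (b⁻¹ * a⁻¹) ^ 2 = (b⁻¹) ^ 2 * (a⁻¹) ^ 2 :=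
            (hC b⁻¹ (A.inv_mem hb) a⁻¹ (A.inv_mem ha)).mul_pow 2
          rw [e1, e2]
  -- conclude
  ext x
  simp only [Set.mem_setOf_eq]
  constructor
  · rintro ⟨k, hk, rfl⟩
    obtain ⟨b, hb, h | h⟩ := hK k hk
    · rw [h]; exact hconj1 b hb
    · rw [h]; exact hconj2 b hb
  · intro h
    rw [isConj_iff] at h
    obtain ⟨c, hc⟩ := h
    refine ⟨g⁻¹ * (c⁻¹)⁻¹ * g * c⁻¹, Subgroup.subset_closure ⟨c⁻¹, rfl⟩, ?_⟩
    rw [← hc]; group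
end

section
/- Let G be a group whose derived subgroup G′ is infinite cyclic, generated by ρ. If g ∈ G has finite order and centralizes ρ, then g lies in the center of G. -/
/-- If the derived subgroup of `G` is infinite cyclic, generated by `ρ`, and `g ∈ G`
has finite order and centralizes `ρ`, then `g` is central in `G`. -/
theorem mem_center_of_torsion_centralizes {G : Type*} [Group G] (ρ : G)
    (hder : commutator G = Subgroup.zpowers ρ) (hρ : ¬ IsOfFinOrder ρ)
    (g : G) (hg : IsOfFinOrder g) (hcomm : g * ρ = ρ * g) :
    g ∈ Subgroup.center G := by
  rw [Subgroup.mem_center_iff]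
  intro x
  -- the commutator of g and x is a power of ρ
  open scoped commutatorElement in
  have hmem : ⁅g, x⁆ ∈ commutator G := by
    rw [commutator_def]
    exact Subgroup.commutator_mem_commutator (Subgroup.mem_top _) (Subgroup.mem_top _)
  rw [hder, Subgroup.mem_zpowers_iff] at hmem
  obtain ⟨n, hn⟩ := hmem
  have hconj : g * x * g⁻¹ = ρ ^ n * x := by
    rw [hn, commutatorElement_def]
    group
  have hcommρ : ∀ m : ℤ, g * ρ ^ m = ρ ^ m * g := fun m =>
    (Commute.zpow_right (hcomm : Commute g ρ) m).eq
  have key : ∀ k : ℕ, g ^ k * x * (g ^ k)⁻¹ = ρ ^ (n * k) * x := by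
    intro k
    induction k with
    | zero => simp
    | succ k ih =>
      have : g ^ (k+1) * x * (g ^ (k+1))⁻¹ = g * (g ^ k * x * (g ^ k)⁻¹) * g⁻¹ := by
        rw [pow_succ']; group
      have step : g * (ρ ^ (n * (k : ℤ)) * x) * g⁻¹ = ρ ^ (n * (k : ℤ)) * (g * x * g⁻¹) := by
        rw [← mul_assoc, hcommρ]
        group
      rw [this, ih, step, hconj, ← mul_assoc, ← zpow_add]
      congr 1
      push_cast
      ring
  have hm : orderOf g ≠ 0 := (orderOf_pos_iff.mpr hg).ne'
  have h1 : g ^ orderOf g = 1 := pow_orderOf_eq_one g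
  have := key (orderOf g)
  rw [h1] at this
  simp at this
  have hρpow : ρ ^ (n * (orderOf g : ℤ)) = 1 := by
    have := this.symm
    rw [eq_comm] at this
    -- this : ρ ^ (n * orderOf g) * x = x
    have h2 : ρ ^ (n * (orderOf g : ℤ)) = (ρ ^ (n * (orderOf g : ℤ)) * x) * x⁻¹ := by group
    rw [h2, this]
    group
  have horder : orderOf ρ = 0 := orderOf_eq_zero hρ
  have hnm : n * (orderOf g : ℤ) = 0 := by
    have := orderOf_dvd_iff_zpow_eq_one.mpr hρpow
    rw [horder] at this
    exact_mod_cast zero_dvd_iff.mp this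
  have hn0 : n = 0 := by
    rcases mul_eq_zero.mp hnm with h | h
    · exact h
    · exact absurd (by exact_mod_cast h) hm
  rw [hn0] at hconj
  simp at hconj
  -- hconj : g * x * g⁻¹ = x
  calc x * g = (g * x * g⁻¹) * g := by rw [hconj]
    _ = g * x := by group
end

section
/- Let G be a group whose derived subgroup G′ is infinite cyclic. Then every element of G of finite odd order lies in the center of G. -/
open scoped commutatorElement

/-- If the derived subgroup of `G` is infinite cyclic, then every element of `G`
of finite odd order is central in `G`. -/
theorem mem_center_of_odd_order {G : Type*} [Group G] (ρ : G)
    (hder : commutator G = Subgroup.zpowers ρ) (hρ : ¬ IsOfFinOrder ρ)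
    (g : G) (hg : IsOfFinOrder g) (hodd : Odd (orderOf g)) :
    g ∈ Subgroup.center G := by
  set n := orderOf g with hn
  have hn0 : 0 < n := hg.orderOf_pos
  have hgn : g ^ n = 1 := pow_orderOf_eq_one g
  have hinj : Function.Injective (fun k : ℤ => ρ ^ k) :=
    injective_zpow_iff_not_isOfFinOrder.mpr hρ
  have hρmem : ρ ∈ commutator G := by rw [hder]; exact Subgroup.mem_zpowers ρ
  have hnorm : g * ρ * g⁻¹ ∈ Subgroup.zpowers ρ := by
    rw [← hder]
    exact (inferInstance : (commutator G).Normal).conj_mem ρ hρmem g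
  obtain ⟨m, hm0⟩ := hnorm
  have hm : ρ ^ m = g * ρ * g⁻¹ := hm0
  have hiter : ∀ j : ℕ, g ^ j * ρ * (g ^ j)⁻¹ = ρ ^ (m ^ j) := by
    intro j; induction j with
    | zero => simp
    | succ j ih =>
      have h1 : g ^ (j + 1) * ρ * (g ^ (j + 1))⁻¹
          = g * (g ^ j * ρ * (g ^ j)⁻¹) * g⁻¹ := by group
      rw [h1, ih, ← conj_zpow, ← hm, ← zpow_mul, pow_succ, mul_comm (m ^ j) m]
  have hmn : m ^ n = 1 := by
    have h := hiter n
    rw [hgn] at h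
    simp only [one_mul, inv_one, mul_one] at h
    exact hinj (a₁ := m ^ n) (a₂ := 1) (by simpa using h.symm)
  have hm1 : m = 1 := by
    rcases Int.isUnit_eq_one_or (IsUnit.of_pow_eq_one hmn hn0.ne') with h | h
    · exact h
    · exfalso
      rw [h, hodd.neg_one_pow] at hmn
      omega
  have hcomm : Commute g ρ := by
    have h : ρ = g * ρ * g⁻¹ := by rw [← hm, hm1, zpow_one]
    exact mul_inv_eq_iff_eq_mul.mp h.symm
  rw [Subgroup.mem_center_iff]
  intro x
  have hcx : ⁅g, x⁆ ∈ Subgroup.zpowers ρ := by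
    rw [← hder]
    exact Subgroup.commutator_mem_commutator (Subgroup.mem_top g) (Subgroup.mem_top x)
  obtain ⟨k, hk0⟩ := hcx
  have hk : ρ ^ k = ⁅g, x⁆ := hk0
  have hgx : g * x * g⁻¹ = ρ ^ k * x := by
    rw [hk, commutatorElement_def]; group
  have hiter2 : ∀ j : ℕ, g ^ j * x * (g ^ j)⁻¹ = ρ ^ ((j : ℤ) * k) * x := by
    intro j; induction j with
    | zero => simp
    | succ j ih =>
      have h1 : g ^ (j + 1) * x * (g ^ (j + 1))⁻¹
          = g * (g ^ j * x * (g ^ j)⁻¹) * g⁻¹ := by group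
      have hc : Commute g (ρ ^ ((j : ℤ) * k)) := hcomm.zpow_right _
      rw [h1, ih]
      push_cast
      calc g * (ρ ^ ((j : ℤ) * k) * x) * g⁻¹
          = (g * ρ ^ ((j : ℤ) * k)) * (x * g⁻¹) := by group
        _ = (ρ ^ ((j : ℤ) * k) * g) * (x * g⁻¹) := by rw [hc.eq]
        _ = ρ ^ ((j : ℤ) * k) * (g * x * g⁻¹) := by group
        _ = ρ ^ ((j : ℤ) * k) * (ρ ^ k * x) := by rw [hgx]
        _ = ρ ^ (((j : ℤ) + 1) * k) * x := by
            rw [← mul_assoc, ← zpow_add]; congr 2; ring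
  have hk0' : k = 0 := by
    have h := hiter2 n
    rw [hgn] at h
    simp only [one_mul, inv_one, mul_one] at h
    have h1 : ρ ^ ((n : ℤ) * k) = 1 := mul_eq_right.mp h.symm
    have h2 : (n : ℤ) * k = 0 := hinj (by simpa using h1)
    have hn0' : (n : ℤ) ≠ 0 := by exact_mod_cast hn0.ne'
    exact (mul_eq_zero.mp h2).resolve_left hn0'
  have h : g * x * g⁻¹ = x := by rw [hgx, hk0', zpow_zero, one_mul]
  exact (mul_inv_eq_iff_eq_mul.mp h).symm
end

section
/- Let G be a group whose derived subgroup G′ is infinite cyclic. Then for every element g of G of finite order, the square g² lies in the center of G; that is, {g² : g ∈ T(G)} ⊆ Z(G). -/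
/-- If the derived subgroup of `G` is infinite cyclic, then the square of every
torsion element of `G` is central: `{g² : g ∈ T(G)} ⊆ Z(G)`. -/
theorem sq_mem_center_of_torsion {G : Type*} [Group G] (ρ : G)
    (hder : commutator G = Subgroup.zpowers ρ) (hρ : ¬ IsOfFinOrder ρ) :
    ∀ g : G, IsOfFinOrder g → g ^ 2 ∈ Subgroup.center G := by
  have hinj : Function.Injective fun n : ℤ => ρ ^ n :=
    injective_zpow_iff_not_isOfFinOrder.mpr hρ
  have hnorm : (commutator G).Normal := inferInstance
  have hρmem : ρ ∈ commutator G := by rw [hder]; exact Subgroup.mem_zpowers ρ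
  -- step 1: any torsion element commuting with ρ is central
  have key : ∀ h : G, IsOfFinOrder h → h * ρ = ρ * h → h ∈ Subgroup.center G := by
    intro h hfin hcomm
    rw [Subgroup.mem_center_iff]
    intro x
    have hc : @Bracket.bracket G G commutatorElement h x ∈ commutator G := by
      rw [commutator_def]
      exact Subgroup.commutator_mem_commutator (Subgroup.mem_top _) (Subgroup.mem_top _)
    rw [hder] at hc
    obtain ⟨k, hk⟩ := hc
    dsimp only at hk
    rw [commutatorElement_def] at hk
    have hconj : h * x * h⁻¹ = ρ ^ k * x := by rw [hk]; group
    have hcommC : Commute h ρ := hcomm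
    have hcommρ : Commute h (ρ ^ k) := hcommC.zpow_right k
    have hiter : ∀ n : ℕ, h ^ n * x * (h ^ n)⁻¹ = ρ ^ ((n : ℤ) * k) * x := by
      intro n
      induction n with
      | zero => simp
      | succ n ih =>
        have e1 : h ^ (n + 1) * x * (h ^ (n + 1))⁻¹
            = h * (h ^ n * x * (h ^ n)⁻¹) * h⁻¹ := by group
        rw [e1, ih]
        have e2 : h * (ρ ^ ((n : ℤ) * k) * x) * h⁻¹
            = ρ ^ ((n : ℤ) * k) * (h * x * h⁻¹) := by
          rw [← mul_assoc, (hcommC.zpow_right ((n : ℤ) * k)).eq]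
          group
        rw [e2, hconj, ← mul_assoc, ← zpow_add]
        congr 2
        push_cast
        ring
    obtain ⟨n, hn, hgn⟩ := hfin.exists_pow_eq_one
    have hx := hiter n
    rw [hgn] at hx
    simp only [one_mul, inv_one, mul_one] at hx
    have hk0 : ρ ^ ((n : ℤ) * k) = ρ ^ (0 : ℤ) := by
      rw [zpow_zero]
      exact mul_right_cancel (a := ρ ^ ((n : ℤ) * k)) (b := x) (by rw [← hx, one_mul])
    have hnk := hinj hk0
    have hk0' : k = 0 := by
      rcases mul_eq_zero.mp hnk with h' | h'
      · exact absurd h' (by exact_mod_cast hn.ne')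
      · exact h'
    have hfix : h * x * h⁻¹ = x := by rw [hconj, hk0', zpow_zero, one_mul]
    calc x * h = (h * x * h⁻¹) * h := by rw [hfix]
    _ = h * x := by group
  intro g hg
  -- conjugation by g sends ρ to ρ^m with m = ±1
  obtain ⟨m, hm⟩ : g * ρ * g⁻¹ ∈ Subgroup.zpowers ρ := by
    rw [← hder]; exact hnorm.conj_mem ρ hρmem g
  obtain ⟨l, hl⟩ : g⁻¹ * ρ * g ∈ Subgroup.zpowers ρ := by
    rw [← hder]
    have := hnorm.conj_mem ρ hρmem g⁻¹
    simpa using this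
  dsimp only at hm hl
  have hml : ρ ^ (m * l) = ρ ^ (1 : ℤ) := by
    have h2 : g⁻¹ * ρ ^ m * g = (g⁻¹ * ρ * g) ^ m := by
      have := conj_zpow (i := m) (a := g⁻¹) (b := ρ)
      simpa [inv_inv] using this.symm
    have h3 : g⁻¹ * ρ ^ m * g = ρ := by rw [hm]; group
    rw [h3, ← hl, ← zpow_mul, mul_comm l m] at h2
    rw [← h2, zpow_one]
  have hml1 : m * l = 1 := hinj hml
  have hm2 : m * m = 1 := by
    rcases Int.isUnit_iff.mp (IsUnit.of_mul_eq_one l hml1) with h' | h' <;> simp [h']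
  have hgg : g ^ 2 * ρ * (g ^ 2)⁻¹ = ρ := by
    have h4 : g ^ 2 * ρ * (g ^ 2)⁻¹ = g * (g * ρ * g⁻¹) * g⁻¹ := by
      rw [pow_two, mul_inv_rev]; group
    have h5 : g * ρ ^ m * g⁻¹ = (g * ρ * g⁻¹) ^ m := conj_zpow.symm
    rw [h4, ← hm, h5, ← hm, ← zpow_mul, hm2, zpow_one]
  refine key (g ^ 2) (hg.pow) ?_
  calc g ^ 2 * ρ = (g ^ 2 * ρ * (g ^ 2)⁻¹) * g ^ 2 := by group
  _ = ρ * g ^ 2 := by rw [hgg]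
end

section
/- Let G be a group whose derived subgroup G′ is infinite cyclic. Then for every element g ∈ G of finite order, the coset gK(g) equals the conjugacy class C_g of g in G, where K(g) = [g, G]. -/
/-- If the derived subgroup of `G` is infinite cyclic, then for every torsion element
`g ∈ G` the coset `g·K(g)` equals the conjugacy class of `g` in `G`. -/
theorem coset_Kcomm_eq_conjClass_of_cyclic_derived {G : Type*} [Group G] (ρ : G)
    (hder : commutator G = Subgroup.zpowers ρ) (hρ : ¬ IsOfFinOrder ρ)
    (g : G) (hg : IsOfFinOrder g) :
    {x : G | ∃ k ∈ Kcomm g, x = g * k} = {x : G | IsConj g x} := by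
  have hinj : Function.Injective fun n : ℤ => ρ ^ n :=
    injective_zpow_iff_not_isOfFinOrder.mpr hρ
  set c : G → G := fun x => g⁻¹ * x⁻¹ * g * x with hc
  -- every commutator [g,x] is a power of ρ
  have hA : ∀ x : G, ∃ a : ℤ, c x = ρ ^ a := by
    intro x
    have h1 : c x ∈ commutator G := by
      have := Subgroup.commutator_mem_commutator (Subgroup.mem_top g⁻¹) (Subgroup.mem_top x⁻¹)
      open scoped commutatorElement in have he : ⁅g⁻¹, x⁻¹⁆ = c x := by simp only [hc, commutatorElement_def]; group
      rw [commutator_def]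
      rwa [he] at this
    rw [hder] at h1
    obtain ⟨a, ha⟩ := Subgroup.mem_zpowers_iff.mp h1
    exact ⟨a, ha.symm⟩
  have hρmem : ρ ∈ commutator G := by rw [hder]; exact Subgroup.mem_zpowers ρ
  haveI hnrm : (commutator G).Normal := Subgroup.commutator_normal ⊤ ⊤
  -- conjugation acts on ⟨ρ⟩ by ±1
  have hB : ∀ x : G, x⁻¹ * ρ * x = ρ ∨ x⁻¹ * ρ * x = ρ⁻¹ := by
    intro x
    have h1 : x⁻¹ * ρ * x ∈ commutator G := by
      simpa using hnrm.conj_mem ρ hρmem x⁻¹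
    have h2 : x * ρ * x⁻¹ ∈ commutator G := hnrm.conj_mem ρ hρmem x
    rw [hder] at h1 h2
    obtain ⟨s, hs⟩ := Subgroup.mem_zpowers_iff.mp h1
    obtain ⟨t, ht⟩ := Subgroup.mem_zpowers_iff.mp h2
    have key : ρ ^ (s * t) = ρ ^ (1 : ℤ) := by
      rw [zpow_mul, hs, show x⁻¹ * ρ * x = x⁻¹ * ρ * x⁻¹⁻¹ from by rw [inv_inv],
        conj_zpow, inv_inv, ht]
      group
    have hst : s * t = 1 := hinj key
    rcases Int.mul_eq_one_iff_eq_one_or_neg_one.mp hst with ⟨h, _⟩ | ⟨h, _⟩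
    · left; rw [← hs, h, zpow_one]
    · right; rw [← hs, h]; group
  -- basic identities for c
  have hmul : ∀ x y : G, c (x * y) = c y * (y⁻¹ * c x * y) := by
    intro x y; simp only [hc]; group
  have hinvf : ∀ x : G, c x⁻¹ = x * (c x)⁻¹ * x⁻¹ := by
    intro x; simp only [hc]; group
  have hone : c 1 = 1 := by simp only [hc]; group
  have hcg : c g = 1 := by simp only [hc]; group
  -- centralizing elements commute with all powers of ρ
  have hcent : ∀ y : G, y⁻¹ * ρ * y = ρ → ∀ a : ℤ, y⁻¹ * ρ ^ a * y = ρ ^ a := by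
    intro y hy a
    have : (y⁻¹ * ρ * y) ^ a = ρ ^ a := by rw [hy]
    rwa [show y⁻¹ * ρ * y = y⁻¹ * ρ * y⁻¹⁻¹ by rw [inv_inv], conj_zpow, inv_inv] at this
  have hcent' : ∀ y : G, y⁻¹ * ρ * y = ρ → ∀ a : ℤ, y * ρ ^ a * y⁻¹ = ρ ^ a := by
    intro y hy a
    have := hcent y hy a
    calc y * ρ ^ a * y⁻¹ = y * (y⁻¹ * ρ ^ a * y) * y⁻¹ := by rw [this]
    _ = ρ ^ a := by group
  -- every commutator value is achieved by a centralizing witness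
  have hC : ∀ x : G, ∃ y : G, c y = c x ∧ y⁻¹ * ρ * y = ρ := by
    intro x
    rcases hB x with hx | hx
    · exact ⟨x, rfl, hx⟩
    rcases hB g with hgρ | hgρ
    · -- g centralizes ρ: then c x = 1
      obtain ⟨a, ha⟩ := hA x
      have hxg : x⁻¹ * g * x = g * ρ ^ a := by
        rw [← ha]; simp only [hc]; group
      have hcomm : Commute g ρ := by
        have : g * (g⁻¹ * ρ * g) = g * ρ := by rw [hgρ]
        have h2 : ρ * g = g * ρ := by
          calc ρ * g = g * (g⁻¹ * ρ * g) := by group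
          _ = g * ρ := this
        exact h2.symm
      set n : ℕ := orderOf g with hn
      have hnpos : 0 < n := hg.orderOf_pos
      have h1 : (x⁻¹ * g * x) ^ n = 1 := by
        rw [show x⁻¹ * g * x = x⁻¹ * g * x⁻¹⁻¹ by rw [inv_inv], conj_pow,
          pow_orderOf_eq_one]
        group
      have h2 : ρ ^ (a * (n : ℤ)) = ρ ^ (0 : ℤ) := by
        rw [zpow_mul, zpow_natCast, zpow_zero]
        calc (ρ ^ a) ^ n = g ^ n * (ρ ^ a) ^ n := by rw [pow_orderOf_eq_one]; group
        _ = (g * ρ ^ a) ^ n := ((hcomm.zpow_right a).mul_pow n).symm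
        _ = (x⁻¹ * g * x) ^ n := by rw [hxg]
        _ = 1 := h1
      have han : a * (n : ℤ) = 0 := hinj h2
      have ha0 : a = 0 := by
        rcases mul_eq_zero.mp han with h | h
        · exact h
        · exact absurd h (by exact_mod_cast hnpos.ne')
      refine ⟨1, ?_, by group⟩
      rw [hone, ha, ha0, zpow_zero]
    · -- g inverts ρ: take y = g * x
      refine ⟨g * x, ?_, ?_⟩
      · rw [hmul g x, hcg]; group
      · have h1 : (g * x)⁻¹ * ρ * (g * x) = x⁻¹ * (g⁻¹ * ρ * g) * x := by group
        rw [h1, hgρ]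
        have h2 : x⁻¹ * ρ⁻¹ * x = (x⁻¹ * ρ * x)⁻¹ := by group
        rw [h2, hx, inv_inv]
  -- every element of Kcomm g is a single commutator
  have hmem : ∀ k ∈ Kcomm g, ∃ x : G, k = c x := by
    intro k hk
    refine Subgroup.closure_induction ?_ ?_ ?_ ?_ hk
    · rintro x ⟨y, rfl⟩; exact ⟨y, rfl⟩
    · exact ⟨1, hone.symm⟩
    · rintro k₁ k₂ _ _ ⟨x, rfl⟩ ⟨y, rfl⟩
      obtain ⟨x', hx'e, hx'c⟩ := hC x
      obtain ⟨y', hy'e, hy'c⟩ := hC y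
      obtain ⟨a, ha⟩ := hA x
      obtain ⟨b, hb⟩ := hA y
      refine ⟨x' * y', ?_⟩
      rw [hmul x' y', hx'e, hy'e, ha, hb, hcent y' hy'c a, ← zpow_add, ← zpow_add,
        add_comm]
    · rintro k _ ⟨x, rfl⟩
      obtain ⟨x', hx'e, hx'c⟩ := hC x
      obtain ⟨a, ha⟩ := hA x
      refine ⟨x'⁻¹, ?_⟩
      rw [hinvf x', hx'e, ha, ← zpow_neg, hcent' x' hx'c (-a), zpow_neg]
  -- conclusion
  ext v
  simp only [Set.mem_setOf_eq]
  constructor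
  · rintro ⟨k, hk, rfl⟩
    obtain ⟨x, rfl⟩ := hmem k hk
    have h1 : g * c x = x⁻¹ * g * (x⁻¹)⁻¹ := by simp only [hc]; group
    rw [h1, isConj_iff]
    exact ⟨x⁻¹, rfl⟩
  · intro hcj
    obtain ⟨u, hu⟩ := isConj_iff.mp hcj
    refine ⟨c u⁻¹, Subgroup.subset_closure ⟨u⁻¹, rfl⟩, ?_⟩
    rw [← hu]; simp only [hc]; group
end
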